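/- arXiv:2101.08094 — 3 statements merged into one kernel-verified Lean document; each statement's English description precedes it below -/
import Mathlib

section
/- Let a, b, s, t, n be positive integers with a < s, s ≤ b, s ≤ t and n ≥ s - 1 + b. Then C(s-1,a)·C(n-s+1,b) ≤ ex(n, K_{a,b}, K_{s,t}) ≤ C(t-1,a)·C(n,b), where C(m,k) denotes the binomial coefficient. (In particular ex(n, K_{a,b}, K_{s,t}) = Θ(n^b).) -/
open SimpleGraph

/-- `F` is contained in `G` as a subgraph, i.e. there is an injective graph
homomorphism from `F` to `G`. -/
def ContainsCopy {α β : Type*} (F : SimpleGraph α) (G : SimpleGraph β) : Prop :=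
  ∃ f : F →g G, Function.Injective f

/-- `N(H,G)`: the number of subgraphs of `G` isomorphic to `H`. -/
noncomputable def copyCount {α β : Type*} (H : SimpleGraph α) (G : SimpleGraph β) : ℕ :=
  Nat.card {G' : G.Subgraph // Nonempty (H ≃g G'.coe)}

/-- `ex(n,H,F)`: the maximum number of copies of `H` in an `F`-free graph on `n` vertices. -/
noncomputable def exGen (n : ℕ) {α β : Type*} (H : SimpleGraph α) (F : SimpleGraph β) : ℕ :=
  sSup {m | ∃ G : SimpleGraph (Fin n), ¬ ContainsCopy F G ∧ m = copyCount H G}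

/-- The complete bipartite graph `K_{a,b}`. -/
abbrev Kbip (a b : ℕ) : SimpleGraph (Fin a ⊕ Fin b) := completeBipartiteGraph (Fin a) (Fin b)

/-- `K̄_{a,b}`: obtained from `K_{a,b}` by adding all edges inside the part of size `a`. -/
def KbipBar (a b : ℕ) : SimpleGraph (Fin a ⊕ Fin b) :=
  SimpleGraph.fromRel (fun u _ => u.isLeft)

/-- `k` vertex-disjoint copies of `G`. -/
def disjCopies (k : ℕ) {α : Type*} (G : SimpleGraph α) : SimpleGraph (Fin k × α) :=
  SimpleGraph.fromRel (fun u v => u.1 = v.1 ∧ G.Adj u.2 v.2)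

/-- The vertex-disjoint union of `G` and `H`. -/
def disjSum {α β : Type*} (G : SimpleGraph α) (H : SimpleGraph β) : SimpleGraph (α ⊕ β) :=
  SimpleGraph.fromRel (fun u v =>
    (∃ x y, u = Sum.inl x ∧ v = Sum.inl y ∧ G.Adj x y) ∨
    (∃ x y, u = Sum.inr x ∧ v = Sum.inr y ∧ H.Adj x y))

/-- Placing a graph `G0` on the `Fin b`-part of the vertex set `Fin a ⊕ Fin b`. -/
def liftRight (a : ℕ) {b : ℕ} (G0 : SimpleGraph (Fin b)) : SimpleGraph (Fin a ⊕ Fin b) :=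
  SimpleGraph.fromRel (fun u v => ∃ x y, u = Sum.inr x ∧ v = Sum.inr y ∧ G0.Adj x y)

section Aux
open Finset

instance {V : Type*} [Finite V] {G : SimpleGraph V} : Finite G.Subgraph :=
  Finite.of_injective (fun G' => (G'.verts, G'.Adj))
    (fun G1 G2 h => by
      obtain ⟨h1, h2⟩ := Prod.mk.injEq .. ▸ h
      exact SimpleGraph.Subgraph.ext h1 h2)

def bipSub {n : ℕ} (G : SimpleGraph (Fin n)) (A B : Finset (Fin n))
    (h : ∀ u ∈ A, ∀ v ∈ B, G.Adj u v) : G.Subgraph where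
  verts := ↑A ∪ ↑B
  Adj u v := (u ∈ A ∧ v ∈ B) ∨ (v ∈ A ∧ u ∈ B)
  adj_sub := by rintro u v (⟨hu, hv⟩ | ⟨hv, hu⟩)
                · exact h u hu v hv
                · exact (h v hv u hu).symm
  edge_vert := by rintro u v (⟨hu, hv⟩ | ⟨hv, hu⟩) <;> simp [hu]
  symm := by constructor; intro u v hx; tauto

lemma bipSub_disj {n : ℕ} {G : SimpleGraph (Fin n)} {A B : Finset (Fin n)}
    (h : ∀ u ∈ A, ∀ v ∈ B, G.Adj u v) : Disjoint (↑A : Set (Fin n)) ↑B := by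
  rw [Set.disjoint_left]
  intro w hwA hwB
  exact G.irrefl (h w hwA w hwB)

noncomputable def bipSubIso {n a b : ℕ} {G : SimpleGraph (Fin n)} {A B : Finset (Fin n)}
    (h : ∀ u ∈ A, ∀ v ∈ B, G.Adj u v) (hA : A.card = a) (hB : B.card = b) :
    Kbip a b ≃g (bipSub G A B h).coe := by
  have hd := bipSub_disj h
  let eA : Fin a ≃ ↥(↑A : Set (Fin n)) := (Finset.equivFinOfCardEq hA).symm
  let eB : Fin b ≃ ↥(↑B : Set (Fin n)) := (Finset.equivFinOfCardEq hB).symm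
  have keyA : ∀ z : ↥(↑A : Set (Fin n)),
      (((Equiv.Set.union hd).symm (Sum.inl z) : ↥((↑A : Set (Fin n)) ∪ ↑B)) : Fin n) = ↑z :=
    fun z => congrArg Subtype.val (Equiv.Set.union_symm_apply_left hd z)
  have keyB : ∀ z : ↥(↑B : Set (Fin n)),
      (((Equiv.Set.union hd).symm (Sum.inr z) : ↥((↑A : Set (Fin n)) ∪ ↑B)) : Fin n) = ↑z :=
    fun z => congrArg Subtype.val (Equiv.Set.union_symm_apply_right hd z)
  have memA : ∀ z : ↥(↑A : Set (Fin n)), (z : Fin n) ∈ A := fun z => by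
    have := z.2; simpa using this
  have memB : ∀ z : ↥(↑B : Set (Fin n)), (z : Fin n) ∈ B := fun z => by
    have := z.2; simpa using this
  have notB : ∀ z : ↥(↑A : Set (Fin n)), (z : Fin n) ∉ B := fun z hzB =>
    Set.disjoint_left.mp hd z.2 (by simpa using hzB)
  have notA : ∀ z : ↥(↑B : Set (Fin n)), (z : Fin n) ∉ A := fun z hzA =>
    Set.disjoint_right.mp hd z.2 (by simpa using hzA)
  refine ⟨(eA.sumCongr eB).trans (Equiv.Set.union hd).symm, ?_⟩
  rintro (x | x) (y | y) <;>
    simp only [RelIso.coe_fn_mk, Equiv.trans_apply, Equiv.sumCongr_apply, Sum.map_inl, Sum.map_inr,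
      Subgraph.coe_adj, completeBipartiteGraph_adj, Sum.isLeft_inl, Sum.isRight_inr,
      Sum.isLeft_inr, Sum.isRight_inl] <;>
    erw [Equiv.trans_apply, Equiv.trans_apply] <;>
    simp only [Equiv.sumCongr_apply, Sum.map_inl, Sum.map_inr] <;>
    simp only [bipSub]
  · erw [keyA (eA x), keyA (eA y)]; simp [memA, memB, notA, notB]
  · erw [keyA (eA x), keyB (eB y)]; simp [memA, memB, notA, notB]
  · erw [keyB (eB x), keyA (eA y)]; simp [memA, memB, notA, notB]
  · erw [keyB (eB x), keyB (eB y)]; simp [memA, memB, notA, notB]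

lemma exists_pair {n a b : ℕ} {G : SimpleGraph (Fin n)} {G' : G.Subgraph}
    (e : Kbip a b ≃g G'.coe) :
    ∃ p : Finset (Fin n) × Finset (Fin n), p.1.card = a ∧ p.2.card = b ∧
      ∃ h : ∀ u ∈ p.1, ∀ v ∈ p.2, G.Adj u v, G' = bipSub G p.1 p.2 h := by
  classical
  set A : Finset (Fin n) := Finset.image (fun i => ((e (Sum.inl i)) : Fin n)) Finset.univ with hAdef
  set B : Finset (Fin n) := Finset.image (fun i => ((e (Sum.inr i)) : Fin n)) Finset.univ with hBdef
  have einj : Function.Injective e := e.toEquiv.injective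
  have hAcard : A.card = a := by
    rw [hAdef, Finset.card_image_of_injective _
      (fun i j hij => Sum.inl_injective (einj (Subtype.ext hij)))]
    simp
  have hBcard : B.card = b := by
    rw [hBdef, Finset.card_image_of_injective _
      (fun i j hij => Sum.inr_injective (einj (Subtype.ext hij)))]
    simp
  -- memberships
  have hmemA : ∀ u, u ∈ A ↔ ∃ i, ((e (Sum.inl i)) : Fin n) = u := by
    intro u; simp [hAdef]
  have hmemB : ∀ v, v ∈ B ↔ ∃ j, ((e (Sum.inr j)) : Fin n) = v := by
    intro v; simp [hBdef]
  have cross : ∀ i j, G'.Adj ((e (Sum.inl i)) : Fin n) ((e (Sum.inr j)) : Fin n) := by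
    intro i j
    have : (Kbip a b).Adj (Sum.inl i) (Sum.inr j) := by simp
    have h2 := e.map_rel_iff.mpr this
    simpa using h2
  have h : ∀ u ∈ A, ∀ v ∈ B, G.Adj u v := by
    intro u hu v hv
    obtain ⟨i, hi⟩ := (hmemA u).mp hu
    obtain ⟨j, hj⟩ := (hmemB v).mp hv
    rw [← hi, ← hj]
    exact G'.adj_sub (cross i j)
  refine ⟨(A, B), hAcard, hBcard, h, ?_⟩
  have hverts : G'.verts = ↑A ∪ ↑B := by
    ext v
    constructor
    · intro hv
      rcases hx : e.symm ⟨v, hv⟩ with i | j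
      · left
        have : e (Sum.inl i) = ⟨v, hv⟩ := by rw [← hx]; simp
        simpa using (hmemA v).mpr ⟨i, by rw [this]⟩
      · right
        have : e (Sum.inr j) = ⟨v, hv⟩ := by rw [← hx]; simp
        simpa using (hmemB v).mpr ⟨j, by rw [this]⟩
    · intro hv
      rcases hv with hv | hv
      · obtain ⟨i, hi⟩ := (hmemA v).mp (by simpa using hv)
        rw [← hi]; exact (e (Sum.inl i)).2
      · obtain ⟨j, hj⟩ := (hmemB v).mp (by simpa using hv)
        rw [← hj]; exact (e (Sum.inr j)).2
  have hadj : ∀ u v, G'.Adj u v ↔ ((u ∈ A ∧ v ∈ B) ∨ (v ∈ A ∧ u ∈ B)) := by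
    intro u v
    constructor
    · intro huv
      have hu : u ∈ G'.verts := G'.edge_vert huv
      have hv : v ∈ G'.verts := G'.edge_vert huv.symm
      have hcoe : G'.coe.Adj ⟨u, hu⟩ ⟨v, hv⟩ := by simpa using huv
      have hx : e (e.symm ⟨u, hu⟩) = ⟨u, hu⟩ := by simp
      have hy : e (e.symm ⟨v, hv⟩) = ⟨v, hv⟩ := by simp
      have hkb : (Kbip a b).Adj (e.symm ⟨u, hu⟩) (e.symm ⟨v, hv⟩) := by
        rw [← e.map_rel_iff, hx, hy]; exact hcoe
      rcases hi : e.symm ⟨u, hu⟩ with i | i <;> rcases hj : e.symm ⟨v, hv⟩ with j | j <;>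
        rw [hi, hj] at hkb <;> simp only [completeBipartiteGraph_adj] at hkb <;>
        first
        | (simp at hkb)
        | skip
      · left
        constructor
        · exact (hmemA u).mpr ⟨i, by rw [show e (Sum.inl i) = ⟨u, hu⟩ by rw [← hi]; simp]⟩
        · exact (hmemB v).mpr ⟨j, by rw [show e (Sum.inr j) = ⟨v, hv⟩ by rw [← hj]; simp]⟩
      · right
        constructor
        · exact (hmemA v).mpr ⟨j, by rw [show e (Sum.inl j) = ⟨v, hv⟩ by rw [← hj]; simp]⟩
        · exact (hmemB u).mpr ⟨i, by rw [show e (Sum.inr i) = ⟨u, hu⟩ by rw [← hi]; simp]⟩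
    · rintro (⟨hu, hv⟩ | ⟨hv, hu⟩)
      · obtain ⟨i, hi⟩ := (hmemA u).mp hu
        obtain ⟨j, hj⟩ := (hmemB v).mp hv
        rw [← hi, ← hj]; exact cross i j
      · obtain ⟨i, hi⟩ := (hmemA v).mp hv
        obtain ⟨j, hj⟩ := (hmemB u).mp hu
        rw [← hi, ← hj]; exact (cross i j).symm
  exact Subgraph.ext hverts (by funext u v; exact propext ((hadj u v).trans (Iff.rfl)))

lemma exists_hom_of_parts {n s t : ℕ} {G : SimpleGraph (Fin n)} {S T : Finset (Fin n)}
    (hS : S.card = s) (hT : T.card = t) (hd : ∀ v ∈ T, v ∉ S)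
    (hadj : ∀ v ∈ T, ∀ u ∈ S, G.Adj v u) :
    ∃ f : Kbip s t →g G, Function.Injective f := by
  let eS : Fin s ≃ ↥S := (Finset.equivFinOfCardEq hS).symm
  let eT : Fin t ≃ ↥T := (Finset.equivFinOfCardEq hT).symm
  refine ⟨⟨Sum.elim (fun i => ↑(eS i)) (fun j => ↑(eT j)), ?_⟩, ?_⟩
  · rintro (x | x) (y | y) hxy
    · simp at hxy
    · exact (hadj _ (eT y).2 _ (eS x).2).symm
    · exact hadj _ (eT x).2 _ (eS y).2
    · simp at hxy
  · show Function.Injective (Sum.elim (fun i => (↑(eS i) : Fin n)) (fun j => ↑(eT j)))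
    rintro (x | x) (y | y) hxy <;> simp only [Sum.elim_inl, Sum.elim_inr] at hxy
    · exact congrArg Sum.inl (eS.injective (Subtype.ext hxy))
    · exact absurd (hxy ▸ (eS x).2) (hd _ (eT y).2)
    · exact absurd (hxy ▸ (eS y).2) (hd _ (eT x).2)
    · exact congrArg Sum.inr (eT.injective (Subtype.ext hxy))

lemma common_le {n s t b : ℕ} (hst : s ≤ t)
    {G : SimpleGraph (Fin n)} (hfree : ¬ ∃ f : Kbip s t →g G, Function.Injective f)
    {B : Finset (Fin n)} (hB : B.card = b) (hsb : s ≤ b)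
    {T0 : Finset (Fin n)} (hT0 : ∀ v ∈ T0, ∀ u ∈ B, G.Adj v u) : T0.card ≤ t - 1 := by
  classical
  by_contra hc
  push_neg at hc
  have hT : t ≤ T0.card := by omega
  obtain ⟨T, hTsub, hTcard⟩ := Finset.exists_subset_card_eq hT
  obtain ⟨S, hSsub, hScard⟩ := Finset.exists_subset_card_eq (show s ≤ B.card by omega)
  refine hfree (exists_hom_of_parts hScard hTcard ?_ ?_)
  · intro v hvT hvS
    exact G.irrefl (hT0 v (hTsub hvT) v (hSsub hvS))
  · intro v hvT u huS
    exact hT0 v (hTsub hvT) u (hSsub huS)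

lemma count_le {n a b s t : ℕ} (hsb : s ≤ b) (hst : s ≤ t)
    {G : SimpleGraph (Fin n)} (hfree : ¬ ∃ f : Kbip s t →g G, Function.Injective f) :
    Nat.card {G' : G.Subgraph // Nonempty (Kbip a b ≃g G'.coe)} ≤
      (t - 1).choose a * n.choose b := by
  classical
  set P : Finset (Finset (Fin n) × Finset (Fin n)) :=
    (Finset.univ ×ˢ Finset.univ).filter
      (fun p => p.1.card = a ∧ p.2.card = b ∧ ∀ u ∈ p.1, ∀ v ∈ p.2, G.Adj u v) with hP
  have step1 : Nat.card {G' : G.Subgraph // Nonempty (Kbip a b ≃g G'.coe)} ≤ P.card := by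
    have : Nat.card {p // p ∈ P} = P.card := by
      simpa using Nat.card_eq_finsetCard P
    rw [← this]
    refine Nat.card_le_card_of_injective
      (fun x => ⟨(exists_pair (Classical.choice x.2)).choose, ?_⟩) ?_
    · obtain ⟨h1, h2, h3, _⟩ := (exists_pair (Classical.choice x.2)).choose_spec
      simp only [hP, Finset.mem_filter, Finset.mem_product, Finset.mem_univ, true_and]
      exact ⟨h1, h2, h3⟩
    · intro x y hxy
      obtain ⟨_, _, hx3, hx4⟩ := (exists_pair (Classical.choice x.2)).choose_spec
      obtain ⟨_, _, hy3, hy4⟩ := (exists_pair (Classical.choice y.2)).choose_spec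
      have hpq : (exists_pair (Classical.choice x.2)).choose
          = (exists_pair (Classical.choice y.2)).choose := congrArg Subtype.val hxy
      apply Subtype.ext
      rw [hx4, hy4]
      congr 1
      · exact congrArg Prod.fst hpq
      · exact congrArg Prod.snd hpq
  have step2 : P.card ≤ (t - 1).choose a * n.choose b := by
    have := Finset.card_le_mul_card_image_of_maps_to
      (f := Prod.snd) (s := P) (t := Finset.univ.powersetCard b)
      (fun p hp => by
        simp only [hP, Finset.mem_filter] at hp
        exact Finset.mem_powersetCard.mpr ⟨Finset.subset_univ _, hp.2.2.1⟩)
      ((t - 1).choose a)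
      (fun B hB => by
        have hBcard : B.card = b := (Finset.mem_powersetCard.mp hB).2
        have hinj : ∀ p ∈ P.filter (fun p => p.2 = B), ∀ q ∈ P.filter (fun p => p.2 = B),
            p.1 = q.1 → p = q := by
          intro p hp q hq hpq
          have h1 := (Finset.mem_filter.mp hp).2
          have h2 := (Finset.mem_filter.mp hq).2
          exact Prod.ext hpq (h1.trans h2.symm)
        calc (P.filter (fun p => p.2 = B)).card
            ≤ ((Finset.univ.filter fun v => ∀ u ∈ B, G.Adj v u).powersetCard a).card := by
              apply Finset.card_le_card_of_injOn Prod.fst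
              · intro p hp
                have hp1 := Finset.mem_filter.mp hp
                have hp2 := Finset.mem_filter.mp hp1.1
                refine Finset.mem_powersetCard.mpr ⟨?_, hp2.2.1⟩
                intro u hu
                refine Finset.mem_filter.mpr ⟨Finset.mem_univ _, fun v hv => ?_⟩
                exact hp2.2.2.2 u hu v (hp1.2 ▸ hv)
              · intro p hp q hq hpq
                exact hinj p hp q hq hpq
          _ ≤ (t - 1).choose a := by
              rw [Finset.card_powersetCard]
              refine Nat.choose_le_choose a (common_le hst hfree hBcard hsb ?_)
              intro v hv u hu
              exact (Finset.mem_filter.mp hv).2 u hu)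
    calc P.card ≤ (t - 1).choose a * (Finset.univ.powersetCard b).card := this
      _ = (t - 1).choose a * n.choose b := by
          rw [Finset.card_powersetCard]; simp
  exact step1.trans step2

lemma pigeon {m n k : ℕ} (g : Fin m → Fin n) (hg : Function.Injective g)
    (h : ∀ i, (g i : ℕ) < k) : m ≤ k := by
  have hinj : Function.Injective (fun i => (⟨(g i : ℕ), h i⟩ : Fin k)) := by
    intro i j hij
    exact hg (by simpa [Fin.ext_iff] using hij)
  simpa using Fintype.card_le_of_injective _ hinj

lemma G0_free {n s t : ℕ} (hs : 0 < s) (hst : s ≤ t) :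
    ¬ ∃ f : Kbip s t →g (SimpleGraph.fromRel (fun u _ : Fin n => (u : ℕ) < s - 1)),
      Function.Injective f := by
  rintro ⟨f, finj⟩
  have hadj : ∀ (i : Fin s) (j : Fin t),
      f (Sum.inl i) ≠ f (Sum.inr j) ∧
        ((f (Sum.inl i) : ℕ) < s - 1 ∨ (f (Sum.inr j) : ℕ) < s - 1) := by
    intro i j
    have : (Kbip s t).Adj (Sum.inl i) (Sum.inr j) := by simp
    exact f.map_rel this
  have hexists : ∃ i : Fin s, ¬ ((f (Sum.inl i) : ℕ) < s - 1) := by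
    by_contra hc
    push_neg at hc
    have := pigeon (fun i => f (Sum.inl i))
      (fun i j hij => Sum.inl_injective (finj hij)) hc
    omega
  obtain ⟨i, hi⟩ := hexists
  have hall : ∀ j : Fin t, (f (Sum.inr j) : ℕ) < s - 1 := by
    intro j
    rcases (hadj i j).2 with h | h
    · exact absurd h hi
    · exact h
  have := pigeon (fun j => f (Sum.inr j))
    (fun i j hij => Sum.inr_injective (finj hij)) hall
  omega

lemma card_filter_lt {n k : ℕ} (hk : k ≤ n) :
    (Finset.univ.filter fun v : Fin n => (v : ℕ) < k).card = k := by
  classical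
  have : (Finset.univ.filter fun v : Fin n => (v : ℕ) < k)
      = Finset.image (Fin.castLE hk) Finset.univ := by
    ext v
    simp only [Finset.mem_filter, Finset.mem_univ, true_and, Finset.mem_image]
    constructor
    · intro hv
      exact ⟨⟨(v : ℕ), hv⟩, Fin.ext rfl⟩
    · rintro ⟨i, rfl⟩
      exact i.2
  rw [this, Finset.card_image_of_injective _ (Fin.castLE_injective hk)]
  simp

lemma count_ge {n s a b : ℕ} (hs : 0 < s) (has : a < s) (hsn : s - 1 + b ≤ n) :
    (s - 1).choose a * (n - (s - 1)).choose b ≤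
      Nat.card {G' : (SimpleGraph.fromRel (fun u _ : Fin n => (u : ℕ) < s - 1)).Subgraph //
        Nonempty (Kbip a b ≃g G'.coe)} := by
  classical
  set G := SimpleGraph.fromRel (fun u _ : Fin n => (u : ℕ) < s - 1) with hG
  set L : Finset (Fin n) := Finset.univ.filter fun v : Fin n => (v : ℕ) < s - 1 with hL
  set R : Finset (Fin n) := Finset.univ.filter fun v : Fin n => ¬ (v : ℕ) < s - 1 with hR
  have hLcard : L.card = s - 1 := card_filter_lt (by omega)
  have hRcard : R.card = n - (s - 1) := by
    have := Finset.card_filter_add_card_filter_not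
      (s := (Finset.univ : Finset (Fin n))) (p := fun v : Fin n => (v : ℕ) < s - 1)
    rw [← hL, ← hR] at this
    have hu : (Finset.univ : Finset (Fin n)).card = n := by simp
    omega
  set Q : Finset (Finset (Fin n) × Finset (Fin n)) :=
    (L.powersetCard a) ×ˢ (R.powersetCard b) with hQ
  have hQcard : Q.card = (s - 1).choose a * (n - (s - 1)).choose b := by
    rw [hQ, Finset.card_product, Finset.card_powersetCard, Finset.card_powersetCard,
      hLcard, hRcard]
  have hadj : ∀ p ∈ Q, ∀ u ∈ p.1, ∀ v ∈ p.2, G.Adj u v := by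
    intro p hp u hu v hv
    obtain ⟨hp1, hp2⟩ := Finset.mem_product.mp hp
    have hu' : (u : ℕ) < s - 1 :=
      (Finset.mem_filter.mp ((Finset.mem_powersetCard.mp hp1).1 hu)).2
    have hv' : ¬ (v : ℕ) < s - 1 :=
      (Finset.mem_filter.mp ((Finset.mem_powersetCard.mp hp2).1 hv)).2
    refine ⟨fun h => hv' (h ▸ hu'), Or.inl hu'⟩
  rw [← hQcard]
  have : Nat.card {p // p ∈ Q} = Q.card := by simpa using Nat.card_eq_finsetCard Q
  rw [← this]
  refine Nat.card_le_card_of_injective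
    (fun x => ⟨bipSub G x.1.1 x.1.2 (hadj x.1 x.2),
      ⟨bipSubIso _ (Finset.mem_powersetCard.mp (Finset.mem_product.mp x.2).1).2
        (Finset.mem_powersetCard.mp (Finset.mem_product.mp x.2).2).2⟩⟩) ?_
  intro x y hxy
  have heq : bipSub G x.1.1 x.1.2 (hadj x.1 x.2) = bipSub G y.1.1 y.1.2 (hadj y.1 y.2) :=
    congrArg Subtype.val hxy
  have hverts : (↑x.1.1 ∪ ↑x.1.2 : Set (Fin n)) = ↑y.1.1 ∪ ↑y.1.2 :=
    congrArg SimpleGraph.Subgraph.verts heq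
  have hxL : ∀ u ∈ x.1.1, (u : ℕ) < s - 1 := fun u hu =>
    (Finset.mem_filter.mp ((Finset.mem_powersetCard.mp (Finset.mem_product.mp x.2).1).1 hu)).2
  have hxR : ∀ u ∈ x.1.2, ¬ (u : ℕ) < s - 1 := fun u hu =>
    (Finset.mem_filter.mp ((Finset.mem_powersetCard.mp (Finset.mem_product.mp x.2).2).1 hu)).2
  have hyL : ∀ u ∈ y.1.1, (u : ℕ) < s - 1 := fun u hu =>
    (Finset.mem_filter.mp ((Finset.mem_powersetCard.mp (Finset.mem_product.mp y.2).1).1 hu)).2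
  have hyR : ∀ u ∈ y.1.2, ¬ (u : ℕ) < s - 1 := fun u hu =>
    (Finset.mem_filter.mp ((Finset.mem_powersetCard.mp (Finset.mem_product.mp y.2).2).1 hu)).2
  have hmem : ∀ v : Fin n, (v ∈ x.1.1 ∨ v ∈ x.1.2) ↔ (v ∈ y.1.1 ∨ v ∈ y.1.2) := by
    intro v
    have := Set.ext_iff.mp hverts v
    simpa using this
  have h1 : x.1.1 = y.1.1 := by
    ext v
    constructor
    · intro hv
      rcases (hmem v).mp (Or.inl hv) with h | h
      · exact h
      · exact absurd (hxL v hv) (hyR v h)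
    · intro hv
      rcases (hmem v).mpr (Or.inl hv) with h | h
      · exact h
      · exact absurd (hyL v hv) (hxR v h)
  have h2 : x.1.2 = y.1.2 := by
    ext v
    constructor
    · intro hv
      rcases (hmem v).mp (Or.inr hv) with h | h
      · exact absurd (hyL v h) (hxR v hv)
      · exact h
    · intro hv
      rcases (hmem v).mpr (Or.inr hv) with h | h
      · exact absurd (hxL v h) (hyR v hv)
      · exact h
  exact Subtype.ext (Prod.ext h1 h2)

end Aux

/-- if `a < s`, `s ≤ b`, `s ≤ t` and `n ≥ s - 1 + b`, then
`C(s-1,a)·C(n-s+1,b) ≤ ex(n, K_{a,b}, K_{s,t}) ≤ C(t-1,a)·C(n,b)`. -/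
theorem stmt0 (a b s t n : ℕ) (ha : 0 < a) (hb : 0 < b) (hs : 0 < s) (ht : 0 < t)
    (hn : 0 < n) (has : a < s) (hsb : s ≤ b) (hst : s ≤ t) (hsn : s - 1 + b ≤ n) :
    Nat.choose (s - 1) a * Nat.choose (n - s + 1) b ≤ exGen n (Kbip a b) (Kbip s t) ∧
    exGen n (Kbip a b) (Kbip s t) ≤ Nat.choose (t - 1) a * Nat.choose n b := by
  classical
  set S : Set ℕ :=
    {m | ∃ G : SimpleGraph (Fin n), ¬ ContainsCopy (Kbip s t) G ∧ m = _root_.copyCount (Kbip a b) G}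
    with hS
  have hexGen : exGen n (Kbip a b) (Kbip s t) = sSup S := rfl
  set G0 : SimpleGraph (Fin n) :=
    SimpleGraph.fromRel (fun u _ : Fin n => (u : ℕ) < s - 1) with hG0
  have hfree : ¬ ContainsCopy (Kbip s t) G0 := G0_free hs hst
  have hmem : _root_.copyCount (Kbip a b) G0 ∈ S := ⟨G0, hfree, rfl⟩
  have hub : ∀ m ∈ S, m ≤ (t - 1).choose a * n.choose b := by
    rintro m ⟨G, hGfree, rfl⟩
    exact count_le hsb hst hGfree
  have hbdd : BddAbove S := ⟨_, hub⟩
  constructor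
  · have h1 : (s - 1).choose a * (n - (s - 1)).choose b ≤ _root_.copyCount (Kbip a b) G0 :=
      count_ge hs has hsn
    have h2 : _root_.copyCount (Kbip a b) G0 ≤ sSup S := le_csSup hbdd hmem
    have h3 : n - s + 1 = n - (s - 1) := by omega
    rw [hexGen, h3]
    exact le_trans h1 h2
  · rw [hexGen]
    exact csSup_le ⟨_, hmem⟩ hub
end

section
/- Let a, b, t be integers with 2 ≤ a < t < b, and assume that either b ≥ a + t, or that b < a + t and all three of the following hold: b > 2a, t ≤ 2a, and a + b ≥ 2t - 1. Then there exists n₀ such that for all n ≥ n₀, ex(n, K_{a,b}, K_{a+1,t}) = N(K_{a,b}, K_{a,n-a}). -/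
open SimpleGraph

namespace Stmt3Aux




lemma descFactorial_split (n s : ℕ) : ∀ u : ℕ,
    n.descFactorial (s + u) = n.descFactorial s * (n - s).descFactorial u
  | 0 => by simp
  | u + 1 => by
    rw [show s + (u+1) = (s+u) + 1 from rfl, Nat.descFactorial_succ,
      descFactorial_split n s u, Nat.descFactorial_succ, Nat.sub_sub]
    ring

lemma pow_le_descFactorial (m : ℕ) : ∀ k : ℕ, (m + 1 - k) ^ k ≤ m.descFactorial k
  | 0 => by simp
  | k + 1 => by
    rw [Nat.descFactorial_succ, pow_succ]
    have h1 : m + 1 - (k+1) = m - k := by omega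
    rw [h1]
    calc (m - k) ^ k * (m - k) ≤ (m + 1 - k) ^ k * (m - k) :=
          Nat.mul_le_mul_right _ (Nat.pow_le_pow_left (by omega) _)
      _ ≤ m.descFactorial k * (m - k) := Nat.mul_le_mul_right _ (pow_le_descFactorial m k)
      _ = (m - k) * m.descFactorial k := by ring

lemma descB (M m : ℕ) : ∀ k : ℕ,
    M.descFactorial k * (m + 1 - k) ^ k ≤ m.descFactorial k * M ^ k
  | 0 => by simp
  | k + 1 => by
    have IH := descB M m k
    have h1 : m + 1 - (k+1) = m - k := by omega
    rw [Nat.descFactorial_succ, Nat.descFactorial_succ, h1, pow_succ, pow_succ]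
    calc (M - k) * M.descFactorial k * ((m - k) ^ k * (m - k))
        = (M - k) * (m - k) * (M.descFactorial k * (m - k) ^ k) := by ring
      _ ≤ (M - k) * (m - k) * (M.descFactorial k * (m + 1 - k) ^ k) :=
          Nat.mul_le_mul_left _ (Nat.mul_le_mul_left _ (Nat.pow_le_pow_left (by omega) _))
      _ ≤ (M - k) * (m - k) * (m.descFactorial k * M ^ k) := Nat.mul_le_mul_left _ IH
      _ ≤ M * (m - k) * (m.descFactorial k * M ^ k) :=
          Nat.mul_le_mul_right _ (Nat.mul_le_mul_right _ (Nat.sub_le _ _))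
      _ = (m - k) * m.descFactorial k * (M ^ k * M) := by ring

lemma bern (m c : ℕ) : ∀ t : ℕ, 2 * t * c ≤ m →
    (m + c) ^ t ≤ m ^ t + 2 * t * c * m ^ (t - 1)
  | 0, _ => by simp
  | 1, _ => by simp; omega
  | s + 2, h => by
    have hs : 2 * (s+1) * c ≤ m := le_trans (Nat.mul_le_mul_right c (by omega)) h
    have IH := bern m c (s+1) hs
    have key : (m + c) ^ (s + 2) ≤ (m + c) * (m ^ (s+1) + 2 * (s+1) * c * m ^ s) := by
      rw [pow_succ, mul_comm]
      exact Nat.mul_le_mul_left _ (by simpa using IH)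
    refine key.trans ?_
    have expand : (m + c) * (m ^ (s+1) + 2 * (s+1) * c * m ^ s)
        = m ^ (s+2) + c * m ^ (s+1) + 2*(s+1)*c * m^(s+1) + 2*(s+1)*c*c* m ^ s := by ring
    rw [expand]
    have h2 : 2*(s+1)*c*c*m^s ≤ c * m^(s+1) := by
      calc 2*(s+1)*c*c*m^s = (2*(s+1)*c) * (c * m^s) := by ring
        _ ≤ m * (c * m ^ s) := Nat.mul_le_mul_right _ hs
        _ = c * m ^ (s+1) := by ring
    have hD : 2*(s+2)*c*m^(s+1) = 2*(s+1)*c*m^(s+1) + 2*(c*m^(s+1)) := by ring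
    have hE : (s+2) - 1 = s + 1 := rfl
    rw [hE, hD]
    omega

lemma bern2 (k m c : ℕ) (hk : k ≤ m) (hm : m ≤ k + c) : ∀ t : ℕ,
    m ^ t ≤ k ^ t + t * c * m ^ (t - 1)
  | 0 => by simp
  | 1 => by simp; omega
  | s + 2 => by
    have IH := bern2 k m c hk hm (s+1)
    calc m ^ (s+2) = m * m ^ (s+1) := by rw [pow_succ]; ring
      _ ≤ m * (k ^ (s+1) + (s+1) * c * m ^ s) := Nat.mul_le_mul_left _ (by simpa using IH)
      _ = m * k ^ (s+1) + (s+1) * c * m ^ (s+1) := by ring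
      _ ≤ (k + c) * k ^ (s+1) + (s+1) * c * m ^ (s+1) :=
          Nat.add_le_add_right (Nat.mul_le_mul_right _ hm) _
      _ = k ^ (s+2) + c * k ^ (s+1) + (s+1) * c * m ^ (s+1) := by ring
      _ ≤ k ^ (s+2) + c * m ^ (s+1) + (s+1) * c * m ^ (s+1) := by
          have := Nat.pow_le_pow_left hk (s+1)
          have := Nat.mul_le_mul_left c this
          omega
      _ = k ^ (s+2) + (s+2) * c * m ^ ((s+2) - 1) := by
          have : (s+2) - 1 = s + 1 := rfl
          rw [this]; ring

lemma pow_sub_ge (v u k : ℕ) (hvu : v ≤ u) (hk : 1 ≤ k) :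
    v ^ k + (u - v) * u ^ (k - 1) ≤ u ^ k := by
  obtain ⟨s, rfl⟩ : ∃ s, k = s + 1 := ⟨k - 1, by omega⟩
  have h1 : v ^ (s+1) ≤ v * u ^ s := by
    rw [pow_succ, mul_comm]
    exact Nat.mul_le_mul_left _ (Nat.pow_le_pow_left hvu _)
  have : v * u ^ s + (u - v) * u ^ s = u ^ (s+1) := by
    rw [← Nat.add_mul]
    rw [Nat.add_sub_cancel' hvu, pow_succ, mul_comm]
  simp only [Nat.add_sub_cancel]
  omega

lemma pow_sub_ge' (v u k : ℕ) (hvu : v ≤ u) (hk : 1 ≤ k) :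
    v ^ k + (u - v) * v ^ (k - 1) ≤ u ^ k := by
  obtain ⟨s, rfl⟩ : ∃ s, k = s + 1 := ⟨k - 1, by omega⟩
  simp only [Nat.add_sub_cancel]
  calc v ^ (s+1) + (u - v) * v ^ s = (v + (u - v)) * v ^ s := by rw [pow_succ]; ring
    _ = u * v ^ s := by rw [Nat.add_sub_cancel' hvu]
    _ ≤ u * u ^ s := Nat.mul_le_mul_left _ (Nat.pow_le_pow_left hvu _)
    _ = u ^ (s+1) := by rw [pow_succ]; ring

lemma pow_sub_ge2 (v u t : ℕ) (hvu : v ≤ u) (ht : 1 ≤ t) :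
    v ^ (t+1) + (u - v) * (u ^ t + v ^ t) ≤ u ^ (t+1) := by
  have h1 : v ^ t + (u - v) * v ^ (t-1) ≤ u ^ t := pow_sub_ge' v u t hvu ht
  have h2 : v * (v ^ t + (u - v) * v ^ (t-1)) ≤ v * u ^ t := Nat.mul_le_mul_left _ h1
  have h3 : v * v ^ (t - 1) = v ^ t := by
    obtain ⟨s, rfl⟩ : ∃ s, t = s + 1 := ⟨t - 1, by omega⟩
    simp [pow_succ]; ring
  have h4 : v ^ (t+1) + (u - v) * v ^ t ≤ v * u ^ t := by
    calc v ^ (t+1) + (u - v) * v ^ t = v * (v ^ t + (u - v) * v ^ (t-1)) := by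
          rw [Nat.mul_add, ← pow_succ']
          congr 1
          rw [← h3]; ring
      _ ≤ v * u ^ t := h2
  have h5 : v * u ^ t + (u - v) * u ^ t = u ^ (t+1) := by
    rw [← Nat.add_mul, Nat.add_sub_cancel' hvu, pow_succ, mul_comm]
  calc v ^ (t+1) + (u - v) * (u ^ t + v ^ t)
      = (v ^ (t+1) + (u - v) * v ^ t) + (u - v) * u ^ t := by ring
    _ ≤ v * u ^ t + (u - v) * u ^ t := Nat.add_le_add_right h4 _
    _ = u ^ (t+1) := h5

lemma hockey (y s : ℕ) : ∀ x N : ℕ, y + x ≤ N →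
    y.choose (s+1) + x * y.choose s ≤ N.choose (s+1)
  | 0, N, h => by simpa using Nat.choose_le_choose (s+1) (by omega)
  | x + 1, N, h => by
    obtain ⟨M, rfl⟩ : ∃ M, N = M + 1 := ⟨N - 1, by omega⟩
    have IH := hockey y s x M (by omega)
    have hys : y.choose s ≤ M.choose s := Nat.choose_le_choose s (by omega)
    have pascal : (M+1).choose (s+1) = M.choose s + M.choose (s+1) := Nat.choose_succ_succ M s
    have hx1 : (x+1) * y.choose s = x * y.choose s + y.choose s := by ring
    omega



/-- threshold for the x-split -/
def thr (a b : ℕ) : ℕ := 2^(b+4)*a*b*b + 2*b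

def bigC (a b : ℕ) : ℕ := 2^(b+5)*(a+b)^4

def nstar (a b : ℕ) : ℕ := (bigC a b)^(2*b+2)

lemma bigC_pos (a b : ℕ) (ha : 1 ≤ a) : 1 ≤ bigC a b := by
  have h1 : 1 ≤ 2^(b+5) := Nat.one_le_two_pow
  have h2 : 1 ≤ (a+b)^4 := Nat.one_le_pow _ _ (by omega)
  calc 1 = 1 * 1 := rfl
    _ ≤ 2^(b+5) * (a+b)^4 := Nat.mul_le_mul h1 h2

lemma bigC_pow_le_nstar (a b k : ℕ) (ha : 1 ≤ a) (hk : k ≤ 2*b+2) :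
    (bigC a b)^k ≤ nstar a b :=
  Nat.pow_le_pow_right (bigC_pos a b ha) hk

lemma two_pow_le_bigC (a b : ℕ) (ha : 1 ≤ a) : 2^(b+5) ≤ bigC a b := by
  have h2 : 1 ≤ (a+b)^4 := Nat.one_le_pow _ _ (by omega)
  calc 2^(b+5) = 2^(b+5) * 1 := by ring
    _ ≤ 2^(b+5) * (a+b)^4 := Nat.mul_le_mul_left _ h2

lemma thr_le_bigC (a b : ℕ) (ha : 2 ≤ a) (hb : 4 ≤ b) : thr a b + a + b ≤ bigC a b := by
  unfold thr bigC
  have hab : 3 ≤ a + b := by omega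
  have h1 : a*b*b ≤ (a+b)^3 := by
    calc a*b*b ≤ (a+b)*(a+b)*(a+b) :=
          Nat.mul_le_mul (Nat.mul_le_mul (by omega) (by omega)) (by omega)
      _ = (a+b)^3 := by ring
  have h2 : 2^(b+4)*(a*b*b) ≤ 2^(b+4)*(a+b)^3 := Nat.mul_le_mul_left _ h1
  have h3 : 2*b + a + b ≤ (a+b)^3 := by
    calc 2*b + a + b ≤ 3*(a+b) := by omega
      _ ≤ (a+b)*(a+b) := Nat.mul_le_mul_right _ hab
      _ ≤ (a+b)*(a+b)*(a+b) := Nat.le_mul_of_pos_right _ (by omega)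
      _ = (a+b)^3 := by ring
  have h4 : (a+b)^3 ≤ 2^(b+4) * (a+b)^3 :=
    Nat.le_mul_of_pos_left _ (pow_pos (by norm_num) _)
  have h5 : 2^(b+4)*(a+b)^3 + 2^(b+4)*(a+b)^3 ≤ 2^(b+5)*(a+b)^4 := by
    have e : 2^(b+5)*(a+b)^4 = (2^(b+4)*(a+b)^3) * (2*(a+b)) := by ring
    have e2 : 2^(b+4)*(a+b)^3 + 2^(b+4)*(a+b)^3 = (2^(b+4)*(a+b)^3) * 2 := by ring
    rw [e, e2]
    exact Nat.mul_le_mul_left _ (by omega)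
  calc 2^(b+4)*a*b*b + 2*b + a + b = 2^(b+4)*(a*b*b) + (2*b + a + b) := by ring
    _ ≤ 2^(b+4)*(a+b)^3 + (a+b)^3 := Nat.add_le_add h2 h3
    _ ≤ 2^(b+4)*(a+b)^3 + 2^(b+4)*(a+b)^3 := Nat.add_le_add_left h4 _
    _ ≤ 2^(b+5)*(a+b)^4 := h5

lemma hockeyD (y s x N : ℕ) (h : y + x ≤ N) :
    y.descFactorial (s+1) + x*((s+1)*y.descFactorial s) ≤ N.descFactorial (s+1) := by
  have hc := hockey y s x N h
  have hm := Nat.mul_le_mul_left ((s+1).factorial) hc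
  calc y.descFactorial (s+1) + x*((s+1)*y.descFactorial s)
      = (s+1).factorial * (y.choose (s+1) + x * y.choose s) := by
        rw [Nat.descFactorial_eq_factorial_mul_choose y (s+1),
          Nat.descFactorial_eq_factorial_mul_choose y s, Nat.factorial_succ]
        ring
    _ ≤ (s+1).factorial * N.choose (s+1) := hm
    _ = N.descFactorial (s+1) := (Nat.descFactorial_eq_factorial_mul_choose N (s+1)).symm

lemma star (a b t N y x : ℕ) (ha : 2 ≤ a) (hat : a < t) (htb : t < b)
    (hN : nstar a b ≤ N) (hy : b ≤ y) (hyx : y + x = N) (hx : 1 ≤ x) :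
    (N + a).descFactorial t * ((min (y - t) (x + a - 1)).descFactorial (b - t))
      + y.descFactorial b ≤ N.descFactorial b := by
  have ht3 : 3 ≤ t := by omega
  have hb4 : 4 ≤ b := by omega
  set r := b - t with hr
  have hr1 : 1 ≤ r := by omega
  have hbtr : b = t + r := by omega
  set m' := min (y - t) (x + a - 1) with hm'
  -- largeness facts
  have ha1 : 1 ≤ a := by omega
  have hC1 : bigC a b ≤ N := by
    have := bigC_pow_le_nstar a b 1 ha1 (by omega)
    simpa using this.trans hN
  have hC4 : (bigC a b)^4 ≤ N := (bigC_pow_le_nstar a b 4 ha1 (by omega)).trans hN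
  have hThr : thr a b + a + b ≤ bigC a b := thr_le_bigC a b ha hb4
  have hPb : (a+b)*(a+b) ≤ bigC a b := by
    have h1 : (a+b)*(a+b) ≤ (a+b)^4 := by
      calc (a+b)*(a+b) = (a+b)^2 := by ring
        _ ≤ (a+b)^4 := Nat.pow_le_pow_right (by omega) (by omega)
    exact h1.trans (Nat.le_mul_of_pos_left _ (pow_pos (by norm_num) _))
  have h64P : 64*((a+b)*(a+b)) ≤ N := by
    have h1 : 64 ≤ 2^(b+5) := by
      calc (64:ℕ) = 2^6 := by norm_num
        _ ≤ 2^(b+5) := Nat.pow_le_pow_right (by norm_num) (by omega)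
    have h2 : (a+b)*(a+b) ≤ (a+b)^4 := by
      calc (a+b)*(a+b) = (a+b)^2 := by ring
        _ ≤ (a+b)^4 := Nat.pow_le_pow_right (by omega) (by omega)
    calc 64*((a+b)*(a+b)) ≤ 2^(b+5) * (a+b)^4 := Nat.mul_le_mul h1 h2
      _ = bigC a b := rfl
      _ ≤ N := hC1
  have hta : t*a ≤ (a+b)*(a+b) := Nat.mul_le_mul (by omega) (by omega)
  have hbb : b*b ≤ (a+b)*(a+b) := Nat.mul_le_mul (by omega) (by omega)
  have h64ta : 64*(t*a) ≤ N := by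
    have := Nat.mul_le_mul_left 64 hta; omega
  have h64bb : 64*(b*b) ≤ N := by
    have := Nat.mul_le_mul_left 64 hbb; omega
  have h4ta : 4*(t*a) ≤ N := by omega
  have hfourb : 4^b ≤ (bigC a b)^2 := by
    calc (4:ℕ)^b = 2^(2*b) := by rw [show (4:ℕ) = 2^2 by norm_num, ← pow_mul]
      _ ≤ 2^(2*b+10) := Nat.pow_le_pow_right (by norm_num) (by omega)
      _ = (2^(b+5))^2 := by rw [← pow_mul]; congr 1; omega
      _ ≤ (bigC a b)^2 := Nat.pow_le_pow_left (two_pow_le_bigC a b ha1) 2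
  have hdm : m'.descFactorial r ≤ (x+a-1)^r :=
    (Nat.descFactorial_le_pow _ _).trans
      (Nat.pow_le_pow_left (le_trans (min_le_right _ _) (le_refl _)) _)
  by_cases hyN : 2*y ≤ N
  · -- CASE U
    obtain ⟨b1, hb1⟩ : ∃ b1, b = b1+1 := ⟨b-1, by omega⟩
    have s1 : m'.descFactorial r ≤ y ^ r :=
      (Nat.descFactorial_le_pow _ _).trans
        (Nat.pow_le_pow_left (le_trans (min_le_left _ _) (by omega)) _)
    have s2 : (N+a).descFactorial t ≤ (N+a)^t := Nat.descFactorial_le_pow _ _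
    have s3 : y.descFactorial b ≤ y ^ b := Nat.descFactorial_le_pow _ _
    have main : (N+a)^t * y^r + y^b ≤ N.descFactorial b := by
      have hcancel : 2^b * ((N+a)^t * y^r + y^b) ≤ 2^b * N.descFactorial b → 
          (N+a)^t * y^r + y^b ≤ N.descFactorial b := fun h =>
        Nat.le_of_mul_le_mul_left h (pow_pos (by norm_num) _)
      apply hcancel
      have e1 : 2^b * ((N+a)^t * y^r) = (2*(N+a))^t * (2*y)^r := by
        rw [hbtr, pow_add, mul_pow, mul_pow]; ring
      have e2 : (2*y)^r ≤ N^r := Nat.pow_le_pow_left hyN _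
      have e3 : (2*(N+a))^t ≤ 2^t*N^t + 4*(t*a)*(2^t*N^(t-1)) := by
        have hb' : 2*t*(2*a) ≤ 2*N := by
          have e : 2*t*(2*a) = 4*(t*a) := by ring
          omega
        have := bern (2*N) (2*a) t hb'
        have e4 : (2*(N+a)) = 2*N + 2*a := by ring
        rw [e4]
        refine this.trans ?_
        have e5 : (2*N)^t = 2^t*N^t := mul_pow 2 N t
        have e6 : (2*N)^(t-1) ≤ 2^t*N^(t-1) := by
          rw [mul_pow]
          exact Nat.mul_le_mul_right _ (Nat.pow_le_pow_right (by norm_num) (by omega))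
        calc (2*N)^t + 2*t*(2*a)*(2*N)^(t-1) ≤ 2^t*N^t + 2*t*(2*a)*(2^t*N^(t-1)) := by
              refine Nat.add_le_add (le_of_eq e5) (Nat.mul_le_mul_left _ e6)
          _ = 2^t*N^t + 4*(t*a)*(2^t*N^(t-1)) := by ring
      have e7 : 2^b * ((N+a)^t * y^r) ≤ (2^t*N^t + 4*(t*a)*(2^t*N^(t-1))) * N^r := by
        rw [e1]; exact Nat.mul_le_mul e3 e2
      have e8 : (2^t*N^t + 4*(t*a)*(2^t*N^(t-1))) * N^r
          = 2^t*N^b + 4*(t*a)*2^t*N^b1 := by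
        have p1 : N^t * N^r = N^b := by rw [← pow_add, ← hbtr]
        have p2 : N^(t-1) * N^r = N^b1 := by
          rw [← pow_add]; congr 1; omega
        calc (2^t*N^t + 4*(t*a)*(2^t*N^(t-1))) * N^r
            = 2^t*(N^t*N^r) + 4*(t*a)*2^t*(N^(t-1)*N^r) := by ring
          _ = 2^t*N^b + 4*(t*a)*2^t*N^b1 := by rw [p1, p2]
      have e9 : 2^b * y^b ≤ N^b := by
        calc 2^b * y^b = (2*y)^b := (mul_pow 2 y b).symm
          _ ≤ N^b := Nat.pow_le_pow_left hyN _
      have e10 : N^b ≤ (N+1-b)^b + b*b*N^b1 := by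
        have hk : N+1-b ≤ N := by omega
        have hm : N ≤ (N+1-b) + b := by omega
        have := bern2 (N+1-b) N b hk hm b
        refine this.trans ?_
        have : N^(b-1) = N^b1 := by congr 1; omega
        rw [this]
      have e11 : (N+1-b)^b ≤ N.descFactorial b := pow_le_descFactorial N b |>.trans_eq' (by congr 1)
      -- scalar inequality
      have hsc : 64*(2^t*N + N + 4*(t*a)*2^t + 2^b*(b*b)) ≤ 64*(2^b*N) := by
        have h2t : 2^t ≤ 2^b1 := Nat.pow_le_pow_right (by norm_num) (by omega)
        have h2b : (2:ℕ)^b = 2^b1*2 := by rw [hb1, pow_succ]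
        have h8A : 8 ≤ 2^b1 := by
          calc (8:ℕ) = 2^3 := by norm_num
            _ ≤ 2^b1 := Nat.pow_le_pow_right (by norm_num) (by omega)
        -- 64*2^t*N ≤ 64*2^b1*N ; 64*N ≤ 8*2^b1*N ; 64*4ta*2^t ≤ 4*2^b1*N ; 64*2^b*b*b ≤ 4*2^b1*N
        have q1 : 64*(2^t*N) ≤ 64*(2^b1*N) := by
          exact Nat.mul_le_mul_left _ (Nat.mul_le_mul_right _ h2t)
        have q2 : 64*N ≤ 8*(2^b1*N) := by
          calc 64*N = 8*(8*N) := by ring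
            _ ≤ 8*(2^b1*N) := Nat.mul_le_mul_left _ (Nat.mul_le_mul_right _ h8A)
        have q3 : 64*(4*(t*a)*2^t) ≤ 4*(2^b1*N) := by
          calc 64*(4*(t*a)*2^t) = (256*(t*a))*2^t := by ring
            _ ≤ (4*N)*2^b1 := Nat.mul_le_mul (by omega) h2t
            _ = 4*(2^b1*N) := by ring
        have q4 : 64*(2^b*(b*b)) ≤ 4*(2^b1*N) := by
          calc 64*(2^b*(b*b)) = (2^b1*2)*(64*(b*b)) := by rw [h2b]; ring
            _ ≤ (2^b1*2)*N := Nat.mul_le_mul_left _ h64bb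
            _ ≤ 4*(2^b1*N) := by
                calc (2^b1*2)*N = 2*(2^b1*N) := by ring
                  _ ≤ 4*(2^b1*N) := Nat.mul_le_mul_right _ (by norm_num)
        have hsum : 64*(2^b1*N) + 8*(2^b1*N) + 4*(2^b1*N) + 4*(2^b1*N) ≤ 64*(2^b1*2*N) := by
          have : 64*(2^b1*2*N) = 128*(2^b1*N) := by ring
          omega
        calc 64*(2^t*N + N + 4*(t*a)*2^t + 2^b*(b*b))
            = 64*(2^t*N) + 64*N + 64*(4*(t*a)*2^t) + 64*(2^b*(b*b)) := by ring
          _ ≤ 64*(2^b1*N) + 8*(2^b1*N) + 4*(2^b1*N) + 4*(2^b1*N) := by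
              exact Nat.add_le_add (Nat.add_le_add (Nat.add_le_add q1 q2) q3) q4
          _ ≤ 64*(2^b1*2*N) := hsum
          _ = 64*(2^b*N) := by rw [h2b]
      have hsc' : 2^t*N + N + 4*(t*a)*2^t + 2^b*(b*b) ≤ 2^b*N :=
        Nat.le_of_mul_le_mul_left hsc (by norm_num)
      -- combine: T + 2^b*b*b*N^b1 ≤ 2^b*N^b
      have hT : (2^t*N^b + 4*(t*a)*2^t*N^b1 + N^b) + 2^b*(b*b)*N^b1 ≤ 2^b*N^b := by
        have eNb : N^b = N^b1 * N := by rw [hb1, pow_succ]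
        have expand : (2^t*N^b + 4*(t*a)*2^t*N^b1 + N^b) + 2^b*(b*b)*N^b1
            = (2^t*N + N + 4*(t*a)*2^t + 2^b*(b*b)) * N^b1 := by
          rw [eNb]; ring
        have expand2 : 2^b*N^b = (2^b*N)*N^b1 := by rw [eNb]; ring
        rw [expand, expand2]
        exact Nat.mul_le_mul_right _ hsc'
      -- finish
      have e12 := Nat.mul_le_mul_left (2^b) e10
      have e13 := Nat.mul_le_mul_left (2^b) e11
      calc 2^b * ((N+a)^t * y^r + y^b) = 2^b * ((N+a)^t * y^r) + 2^b * y^b := by ring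
        _ ≤ (2^t*N^b + 4*(t*a)*2^t*N^b1) + N^b := by
            refine Nat.add_le_add (e7.trans (le_of_eq e8)) e9
        _ ≤ 2^b * (N+1-b)^b := by
            have expand3 : 2^b*((N+1-b)^b + b*b*N^b1) = 2^b*(N+1-b)^b + 2^b*(b*b)*N^b1 := by ring
            rw [expand3] at e12
            omega
        _ ≤ 2^b * N.descFactorial b := e13
    calc (N+a).descFactorial t * m'.descFactorial r + y.descFactorial b
        ≤ (N+a)^t * y^r + y^b := Nat.add_le_add (Nat.mul_le_mul s2 s1) s3
      _ ≤ N.descFactorial b := main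
  · -- CASE V
    push_neg at hyN
    have hxy : x < y := by omega
    have h2x : 2*x ≤ N := by omega
    have hsd : (N+a).descFactorial t ≤ (N+a)^t := Nat.descFactorial_le_pow _ _
    obtain ⟨t1, ht1⟩ : ∃ t1, t = t1+1 := ⟨t-1, by omega⟩
    have hNt : N*N^(t-1) = N^t := by
      rw [ht1]; simp only [Nat.add_sub_cancel]; rw [pow_succ]; ring
    have hnat : (N+a)*(N+a)^(t-1) = (N+a)^t := by
      rw [ht1]; simp only [Nat.add_sub_cancel]; rw [pow_succ]; ring
    have hbble : b ≤ b*b := Nat.le_mul_of_pos_left _ (by omega)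
    have hbN : 4*b ≤ N := by omega
    have hax : x + a - 1 ≤ a * x := by
      obtain ⟨p, hp⟩ : ∃ p, a = p+1 := ⟨a-1, by omega⟩
      obtain ⟨q, hq⟩ : ∃ q, x = q+1 := ⟨x-1, by omega⟩
      have e : a*x = p*q + p + q + 1 := by rw [hp, hq]; ring
      omega
    have haC : a ≤ bigC a b := by omega
    have hXaC : thr a b + a ≤ bigC a b := by omega
    have hCsq : (bigC a b)^2 ≤ (bigC a b)^4 :=
      Nat.pow_le_pow_right (bigC_pos a b ha1) (by omega)
    by_cases hxX : x ≤ thr a b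
    · -- V-A : small x
      obtain ⟨s1, hs1⟩ : ∃ s1, b = s1+1 := ⟨b-1, by omega⟩
      -- shared: Z facts
      have hZd : (y+1-t)^t ≤ y.descFactorial t := pow_le_descFactorial y t
      have hn4Z : (N+a) ≤ 4*(y+1-t) := by
        have htta : t ≤ t*a := Nat.le_mul_of_pos_right _ (by omega)
        omega
      have h4Zt : (N+a)^t ≤ 4^t * (y+1-t)^t := by
        calc (N+a)^t ≤ (4*(y+1-t))^t := Nat.pow_le_pow_left hn4Z _
          _ = 4^t*(y+1-t)^t := mul_pow _ _ _
      have hmain : (N+a).descFactorial t * m'.descFactorial r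
          ≤ x*(b*(y.descFactorial s1)) := by
        rcases Nat.lt_or_ge r 2 with hr2 | hr2
        · -- r = 1
          have hre : r = 1 := by omega
          have hs1t : s1 = t := by omega
          have hd1 : m'.descFactorial r = m' := by rw [hre, Nat.descFactorial_one]
          have hma : m' ≤ a*x := le_trans (min_le_right _ _) hax
          have hcB : x + a + t - 1 ≤ bigC a b := by omega
          have hbern2 : (N+a)^t ≤ (y+1-t)^t + t*(x+a+t-1)*(N+a)^(t-1) :=
            bern2 (y+1-t) (N+a) (x+a+t-1) (by omega) (by omega) t
          have hE : 4^t*(a*(t*(x+a+t-1))) ≤ 2*(N+a) := by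
            have h4 : (4:ℕ)^t ≤ (bigC a b)^2 :=
              (Nat.pow_le_pow_right (by norm_num) (by omega)).trans hfourb
            have hatP : a*t ≤ (a+b)*(a+b) := Nat.mul_le_mul (by omega) (by omega)
            have h5 : a*(t*(x+a+t-1)) ≤ (bigC a b)*(bigC a b) := by
              calc a*(t*(x+a+t-1)) = (a*t)*(x+a+t-1) := by ring
                _ ≤ ((a+b)*(a+b))*(bigC a b) := Nat.mul_le_mul hatP hcB
                _ ≤ (bigC a b)*(bigC a b) := Nat.mul_le_mul_right _ hPb
            calc 4^t*(a*(t*(x+a+t-1))) ≤ (bigC a b)^2*((bigC a b)*(bigC a b)) :=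
                  Nat.mul_le_mul h4 h5
              _ = (bigC a b)^4 := by ring
              _ ≤ N := hC4
              _ ≤ 2*(N+a) := by omega
          have hmid : 4^t*(a*(t*(x+a+t-1))*(N+a)^(t-1)) ≤ 4^t*(2*(y+1-t)^t) := by
            calc 4^t*(a*(t*(x+a+t-1))*(N+a)^(t-1))
                = (4^t*(a*(t*(x+a+t-1))))*(N+a)^(t-1) := by ring
              _ ≤ (2*(N+a))*(N+a)^(t-1) := Nat.mul_le_mul_right _ hE
              _ = 2*((N+a)*(N+a)^(t-1)) := by ring
              _ = 2*(N+a)^t := by rw [hnat]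
              _ ≤ 2*(4^t*(y+1-t)^t) := Nat.mul_le_mul_left _ h4Zt
              _ = 4^t*(2*(y+1-t)^t) := by ring
          have hmid2 : a*(t*(x+a+t-1))*(N+a)^(t-1) ≤ 2*(y+1-t)^t :=
            Nat.le_of_mul_le_mul_left hmid (pow_pos (by norm_num) _)
          have key : a*((N+a).descFactorial t) ≤ b*(y.descFactorial t) := by
            calc a*((N+a).descFactorial t) ≤ a*(N+a)^t := Nat.mul_le_mul_left _ hsd
              _ ≤ a*((y+1-t)^t + t*(x+a+t-1)*(N+a)^(t-1)) := Nat.mul_le_mul_left _ hbern2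
              _ = a*(y+1-t)^t + a*(t*(x+a+t-1))*(N+a)^(t-1) := by ring
              _ ≤ a*(y+1-t)^t + 2*(y+1-t)^t := Nat.add_le_add_left hmid2 _
              _ = (a+2)*(y+1-t)^t := by ring
              _ ≤ b*(y+1-t)^t := Nat.mul_le_mul_right _ (by omega)
              _ ≤ b*(y.descFactorial t) := Nat.mul_le_mul_left _ hZd
          calc (N+a).descFactorial t * m'.descFactorial r
              = (N+a).descFactorial t * m' := by rw [hd1]
            _ ≤ (N+a).descFactorial t * (a*x) := Nat.mul_le_mul_left _ hma
            _ = (a*((N+a).descFactorial t))*x := by ring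
            _ ≤ (b*(y.descFactorial t))*x := Nat.mul_le_mul_right _ key
            _ = x*(b*(y.descFactorial t)) := by ring
            _ = x*(b*(y.descFactorial s1)) := by rw [hs1t]
        · -- r ≥ 2
          obtain ⟨r1, hr1e⟩ : ∃ r1, r = r1+1 := ⟨r-1, by omega⟩
          have hr11 : 1 ≤ r1 := by omega
          have hsplit : y.descFactorial s1 = y.descFactorial t * (y-t).descFactorial r1 := by
            have e : s1 = t + r1 := by omega
            rw [e, descFactorial_split]
          have hpow : m'.descFactorial r ≤ (thr a b + a)^r1 * (a*x) := by
            calc m'.descFactorial r ≤ (x+a-1)^r := hdm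
              _ = (x+a-1)^r1*(x+a-1) := by rw [hr1e, pow_succ]
              _ ≤ (thr a b + a)^r1 * (a*x) :=
                  Nat.mul_le_mul (Nat.pow_le_pow_left (by omega) _) hax
          have hWd : (y-t+1-r1)^r1 ≤ (y-t).descFactorial r1 := by
            have := pow_le_descFactorial (y-t) r1
            have e : y - t + 1 - r1 = (y-t) + 1 - r1 := by omega
            rwa [e]
          have hNW : N ≤ 4*(y-t+1-r1) := by omega
          have hfour' : (4:ℕ)^(b+1) ≤ (bigC a b)^2 := by
            calc (4:ℕ)^(b+1) = 2^(2*(b+1)) := by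
                  rw [show (4:ℕ) = 2^2 by norm_num, ← pow_mul]
              _ ≤ 2^(2*b+10) := Nat.pow_le_pow_right (by norm_num) (by omega)
              _ = (2^(b+5))^2 := by rw [← pow_mul]; congr 1; omega
              _ ≤ (bigC a b)^2 := Nat.pow_le_pow_left (two_pow_le_bigC a b ha1) 2
          have hNbig : 4^(b+1)*(a*(thr a b + a)) ≤ N := by
            calc 4^(b+1)*(a*(thr a b + a)) ≤ (bigC a b)^2*((bigC a b)*(bigC a b)) :=
                  Nat.mul_le_mul hfour' (Nat.mul_le_mul haC hXaC)
              _ = (bigC a b)^4 := by ring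
              _ ≤ N := hC4
          have hWlow : 4^b*(a*(thr a b + a)) ≤ y-t+1-r1 := by
            have h1 : 4*(4^b*(a*(thr a b + a))) ≤ 4*(y-t+1-r1) := by
              calc 4*(4^b*(a*(thr a b + a))) = 4^(b+1)*(a*(thr a b + a)) := by
                    rw [pow_succ]; ring
                _ ≤ N := hNbig
                _ ≤ 4*(y-t+1-r1) := hNW
            exact Nat.le_of_mul_le_mul_left h1 (by norm_num)
          have hWpow : 4^t*(a*(thr a b + a)^r1) ≤ (y-t+1-r1)^r1 := by
            have h4tb : (4:ℕ)^t ≤ 4^b := Nat.pow_le_pow_right (by norm_num) (by omega)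
            calc 4^t*(a*(thr a b + a)^r1) ≤ 4^b*(a*(thr a b + a)^r1) :=
                  Nat.mul_le_mul_right _ h4tb
              _ = (4^b*a)*(thr a b + a)^r1 := by ring
              _ ≤ (4^b*a)^r1*(thr a b + a)^r1 := by
                  refine Nat.mul_le_mul_right _ (Nat.le_self_pow (by omega) _)
              _ = ((4^b*a)*(thr a b + a))^r1 := (mul_pow _ _ _).symm
              _ = (4^b*(a*(thr a b + a)))^r1 := by rw [mul_assoc]
              _ ≤ (y-t+1-r1)^r1 := Nat.pow_le_pow_left hWlow _
          calc (N+a).descFactorial t * m'.descFactorial r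
              ≤ (N+a)^t * ((thr a b + a)^r1*(a*x)) := Nat.mul_le_mul hsd hpow
            _ ≤ (4^t*(y+1-t)^t) * ((thr a b + a)^r1*(a*x)) := Nat.mul_le_mul_right _ h4Zt
            _ = ((4^t*(a*(thr a b + a)^r1)) * (y+1-t)^t) * x := by ring
            _ ≤ (((y-t+1-r1)^r1) * (y+1-t)^t) * x := by
                refine Nat.mul_le_mul_right _ (Nat.mul_le_mul_right _ hWpow)
            _ ≤ (((y-t).descFactorial r1) * (y.descFactorial t)) * x :=
                Nat.mul_le_mul_right _ (Nat.mul_le_mul hWd hZd)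
            _ ≤ (b*((y.descFactorial t) * ((y-t).descFactorial r1))) * x := by
                refine Nat.mul_le_mul_right _ ?_
                calc (y-t).descFactorial r1 * y.descFactorial t
                    = 1*(y.descFactorial t * (y-t).descFactorial r1) := by ring
                  _ ≤ b*(y.descFactorial t * (y-t).descFactorial r1) :=
                      Nat.mul_le_mul_right _ (by omega)
            _ = x*(b*(y.descFactorial s1)) := by rw [hsplit]; ring
      -- conclude V-A with hockey
      have hh : y.descFactorial b + x*(b*(y.descFactorial s1)) ≤ N.descFactorial b := by
        rw [hs1]
        exact hockeyD y s1 x N (by omega)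
      omega
    · -- V-B : large x
      push_neg at hxX
      have hthrb : b ≤ thr a b := by
        have h1 : (0:ℕ) < 2^(b+4)*a*b*b := by positivity
        unfold thr; omega
      have hyub : y + b ≤ N + 1 := by omega
      have hu1 : 1 ≤ N+1-b := by omega
      have hupos : 0 < (N+1-b)^b := pow_pos (by omega) _
      have hyu' : y ≤ N+1-b := by omega
      have huy : N+1-b - y = x+1-b := by omega
      have hdescB := descB y N b
      have hudesc : (N+1-b)^b ≤ N.descFactorial b := pow_le_descFactorial N b
      have hxN : x + 1 - b ≤ N := by omega
      have hbernN : (N+a)^t ≤ N^t + 2*(t*a)*N^(t-1) := by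
        have h1 : 2*t*a ≤ N := by
          have e : 2*t*a = 2*(t*a) := by ring
          omega
        have h2 := bern N a t h1
        have e : 2*t*a = 2*(t*a) := by ring
        rwa [e] at h2
      suffices R : (N+a).descFactorial t * m'.descFactorial r * (N+1-b)^b
          + N.descFactorial b * y^b ≤ N.descFactorial b * (N+1-b)^b by
        have hfin : ((N+a).descFactorial t * m'.descFactorial r + y.descFactorial b) * (N+1-b)^b
            ≤ N.descFactorial b * (N+1-b)^b := by
          calc ((N+a).descFactorial t * m'.descFactorial r + y.descFactorial b) * (N+1-b)^b
              = (N+a).descFactorial t * m'.descFactorial r * (N+1-b)^b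
                + y.descFactorial b * (N+1-b)^b := by ring
            _ ≤ (N+a).descFactorial t * m'.descFactorial r * (N+1-b)^b
                + N.descFactorial b * y^b := Nat.add_le_add_left hdescB _
            _ ≤ N.descFactorial b * (N+1-b)^b := R
        exact Nat.le_of_mul_le_mul_right hfin hupos
      rcases Nat.lt_or_ge r 2 with hr2 | hr2
      · -- V-B2 : r = 1
        have hre : r = 1 := by omega
        have hbt1 : b = t+1 := by omega
        have hstep : y^b + (N+1-b - y)*((N+1-b)^t + y^t) ≤ (N+1-b)^b := by
          have := pow_sub_ge2 y (N+1-b) t hyu' (by omega)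
          calc y^b + (N+1-b - y)*((N+1-b)^t + y^t)
              = y^(t+1) + (N+1-b - y)*((N+1-b)^t + y^t) := by rw [hbt1]
            _ ≤ (N+1-b)^(t+1) := this
            _ = (N+1-b)^b := by rw [hbt1]
        have hcore : (N+a)^t * (x+a-1) ≤ (x+1-b)*((N+1-b)^t + y^t) := by
          have hq1 : x+a-1 ≤ (x+1-b) + (a+b) := by omega
          have hub : N^t ≤ (N+1-b)^t + t*b*N^(t-1) := by
            have h := bern2 (N+1-b) N (b-1) (by omega) (by omega) t
            refine h.trans (Nat.add_le_add_left ?_ _)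
            exact Nat.mul_le_mul_right _ (Nat.mul_le_mul_left _ (by omega))
          have hyt : N^t ≤ 2^t*y^t := by
            calc N^t ≤ (2*y)^t := Nat.pow_le_pow_left (by omega) _
              _ = 2^t*y^t := mul_pow _ _ _
          have hltb : 2^(t+1)*(t*b) ≤ N := by
            have h1 : (2:ℕ)^(t+1) ≤ 2^(b+5) := Nat.pow_le_pow_right (by norm_num) (by omega)
            have h2 : t*b ≤ (a+b)*(a+b) := Nat.mul_le_mul (by omega) (by omega)
            calc 2^(t+1)*(t*b) ≤ (bigC a b)*(bigC a b) :=
                  Nat.mul_le_mul (h1.trans (two_pow_le_bigC a b ha1)) (h2.trans hPb)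
              _ = (bigC a b)^2 := by ring
              _ ≤ (bigC a b)^4 := hCsq
              _ ≤ N := hC4
          have hE2 : 2*(t*b*N^(t-1)) ≤ y^t := by
            have h1 : 2^t*(2*(t*b*N^(t-1))) ≤ 2^t*y^t := by
              calc 2^t*(2*(t*b*N^(t-1))) = (2^(t+1)*(t*b))*N^(t-1) := by ring
                _ ≤ N*N^(t-1) := Nat.mul_le_mul_right _ hltb
                _ = N^t := hNt
                _ ≤ 2^t*y^t := hyt
            exact Nat.le_of_mul_le_mul_left h1 (pow_pos (by norm_num) _)
          have htaab : t*a ≤ a*b := by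
            calc t*a ≤ b*a := Nat.mul_le_mul_right _ (by omega)
              _ = a*b := by ring
          have habab : a+b ≤ 2*(a*b) := by
            have h1 : a ≤ a*b := Nat.le_mul_of_pos_right _ (by omega)
            have h2 : b ≤ a*b := Nat.le_mul_of_pos_left _ (by omega)
            omega
          have hxb : 2^(t+1)*(2*(a+b)+2*(t*a)) ≤ x+1-b := by
            have h1 : 2*(a+b)+2*(t*a) ≤ 8*(a*b) := by omega
            have h2 : (2:ℕ)^(t+1) ≤ 2^(b+1) := Nat.pow_le_pow_right (by norm_num) (by omega)
            have h3 : 2^(t+1)*(2*(a+b)+2*(t*a)) ≤ 2^(b+1)*(8*(a*b)) := Nat.mul_le_mul h2 h1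
            have h4 : 2^(b+1)*(8*(a*b)) ≤ 2^(b+4)*a*b*b := by
              have e1 : 2^(b+1)*(8*(a*b)) = 2^(b+4)*a*b := by
                rw [show b+4 = (b+1)+3 by omega, pow_add]; ring
              have e2 : 2^(b+4)*a*b ≤ 2^(b+4)*a*b*b :=
                Nat.le_mul_of_pos_right _ (by omega)
              omega
            have h5 : 2^(b+4)*a*b*b + 2*b < x := by
              have := hxX; unfold thr at this; omega
            omega
          have hE1 : 2*((2*(a+b)+2*(t*a))*N^t) ≤ (x+1-b)*y^t := by
            calc 2*((2*(a+b)+2*(t*a))*N^t) ≤ 2*((2*(a+b)+2*(t*a))*(2^t*y^t)) :=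
                  Nat.mul_le_mul_left _ (Nat.mul_le_mul_left _ hyt)
              _ = (2^(t+1)*(2*(a+b)+2*(t*a)))*y^t := by ring
              _ ≤ (x+1-b)*y^t := Nat.mul_le_mul_right _ hxb
          have hE2' : 2*((x+1-b)*(t*b*N^(t-1))) ≤ (x+1-b)*y^t := by
            calc 2*((x+1-b)*(t*b*N^(t-1))) = (x+1-b)*(2*(t*b*N^(t-1))) := by ring
              _ ≤ (x+1-b)*y^t := Nat.mul_le_mul_left _ hE2
          have hT3 : 2*(t*a)*N^(t-1)*(x+1-b) ≤ 2*(t*a)*N^t := by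
            calc 2*(t*a)*N^(t-1)*(x+1-b) ≤ 2*(t*a)*N^(t-1)*N := Nat.mul_le_mul_left _ hxN
              _ = 2*(t*a)*(N*N^(t-1)) := by ring
              _ = 2*(t*a)*N^t := by rw [hNt]
          have hT4 : 2*(t*a)*(a+b)*N^(t-1) ≤ (a+b)*N^t := by
            have h1 : 2*(t*a) ≤ N := by omega
            calc 2*(t*a)*(a+b)*N^(t-1) = (a+b)*((2*(t*a))*N^(t-1)) := by ring
              _ ≤ (a+b)*(N*N^(t-1)) := Nat.mul_le_mul_left _ (Nat.mul_le_mul_right _ h1)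
              _ = (a+b)*N^t := by rw [hNt]
          have hmul : (N+a)^t * (x+a-1) ≤ (N^t + 2*(t*a)*N^(t-1))*((x+1-b)+(a+b)) :=
            Nat.mul_le_mul hbernN hq1
          have hexp : (N^t + 2*(t*a)*N^(t-1))*((x+1-b)+(a+b))
              = (x+1-b)*N^t + (a+b)*N^t + 2*(t*a)*N^(t-1)*(x+1-b)
                + 2*(t*a)*(a+b)*N^(t-1) := by ring
          have hubx : (x+1-b)*N^t ≤ (x+1-b)*(N+1-b)^t + (x+1-b)*(t*b*N^(t-1)) := by
            calc (x+1-b)*N^t ≤ (x+1-b)*((N+1-b)^t + t*b*N^(t-1)) := Nat.mul_le_mul_left _ hub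
              _ = (x+1-b)*(N+1-b)^t + (x+1-b)*(t*b*N^(t-1)) := by ring
          have hKN : (a+b)*N^t + 2*(t*a)*N^t + (a+b)*N^t = (2*(a+b)+2*(t*a))*N^t := by ring
          have hgoal : (x+1-b)*((N+1-b)^t + y^t)
              = (x+1-b)*(N+1-b)^t + (x+1-b)*y^t := by ring
          omega
        calc (N+a).descFactorial t * m'.descFactorial r * (N+1-b)^b
              + N.descFactorial b * y^b
            ≤ ((N+a)^t*(x+a-1))*(N+1-b)^b + N.descFactorial b * y^b := by
              refine Nat.add_le_add_right (Nat.mul_le_mul_right _ (Nat.mul_le_mul hsd ?_)) _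
              rw [hre, Nat.descFactorial_one]
              exact min_le_right _ _
          _ ≤ ((x+1-b)*((N+1-b)^t + y^t))*(N+1-b)^b + N.descFactorial b * y^b := by
              exact Nat.add_le_add_right (Nat.mul_le_mul_right _ hcore) _
          _ = (N+1-b)^b*((x+1-b)*((N+1-b)^t + y^t)) + N.descFactorial b * y^b := by ring
          _ ≤ N.descFactorial b*((x+1-b)*((N+1-b)^t + y^t)) + N.descFactorial b * y^b :=
              Nat.add_le_add_right (Nat.mul_le_mul_right _ hudesc) _
          _ = N.descFactorial b*(y^b + (N+1-b - y)*((N+1-b)^t + y^t)) := by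
              rw [huy]; ring
          _ ≤ N.descFactorial b * (N+1-b)^b := Nat.mul_le_mul_left _ hstep
      · -- V-B1 : r ≥ 2
        obtain ⟨r1, hr1e⟩ : ∃ r1, r = r1+1 := ⟨r-1, by omega⟩
        have hr11 : 1 ≤ r1 := by omega
        obtain ⟨b1, hb1⟩ : ∃ b1, b = b1+1 := ⟨b-1, by omega⟩
        obtain ⟨b2, hb2⟩ : ∃ b2, b1 = b2+1 := ⟨b1-1, by omega⟩
        have hNb1 : N*N^(b1-1) = N^b1 := by
          rw [hb2]; simp only [Nat.add_sub_cancel]; rw [pow_succ]; ring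
        have hstep : y^b + (N+1-b - y)*(N+1-b)^b1 ≤ (N+1-b)^b := by
          have := pow_sub_ge y (N+1-b) b hyu' (by omega)
          have e : b - 1 = b1 := by omega
          rwa [e] at this
        have hcore : (N+a)^t * (x+a-1)^r ≤ (N+1-b)^b1*(x+1-b) := by
          have hra : 2*(r*a) ≤ x := by
            have h1 : r*a ≤ b*a := Nat.mul_le_mul_right _ (by omega)
            have h2 : 2*(b*a) ≤ 2^(b+4)*a*b*b := by
              have e1 : 2^(b+4)*a*b*b = (2^(b+4)*b)*(b*a) := by ring
              rw [e1]
              refine Nat.mul_le_mul_right _ ?_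
              calc (2:ℕ) ≤ 2^(b+4) := by
                    calc (2:ℕ) = 2^1 := by norm_num
                      _ ≤ 2^(b+4) := Nat.pow_le_pow_right (by norm_num) (by omega)
                _ ≤ 2^(b+4)*b := Nat.le_mul_of_pos_right _ (by omega)
            have h5 : 2^(b+4)*a*b*b + 2*b < x := by
              have := hxX; unfold thr at this; omega
            omega
          have hbernx : (x+a)^r ≤ x^r + 2*r*a*x^(r-1) := by
            have h1 : 2*r*a ≤ x := by
              have e : 2*r*a = 2*(r*a) := by ring
              omega
            exact bern x a r h1
          have hxr : x^(r-1) = x^r1 := by rw [hr1e, Nat.add_sub_cancel]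
          have hLHS : (N+a)^t * (x+a-1)^r
              ≤ N^t*x^r + N^t*(2*(r*a)*x^r1) + (2*(t*a)*N^(t-1))*x^r
                + (2*(t*a)*N^(t-1))*(2*(r*a)*x^r1) := by
            calc (N+a)^t * (x+a-1)^r ≤ (N+a)^t * (x+a)^r :=
                  Nat.mul_le_mul_left _ (Nat.pow_le_pow_left (by omega) _)
              _ ≤ (N^t + 2*(t*a)*N^(t-1))*(x^r + 2*r*a*x^(r-1)) :=
                  Nat.mul_le_mul hbernN hbernx
              _ = N^t*x^r + N^t*(2*(r*a)*x^(r-1)) + (2*(t*a)*N^(t-1))*x^r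
                  + (2*(t*a)*N^(t-1))*(2*(r*a)*x^(r-1)) := by ring
              _ = N^t*x^r + N^t*(2*(r*a)*x^r1) + (2*(t*a)*N^(t-1))*x^r
                  + (2*(t*a)*N^(t-1))*(2*(r*a)*x^r1) := by rw [hxr]
          have key1 : 2*(N^t*x^r) ≤ N^b1*x := by
            have h2r : (2:ℕ) ≤ 2^r1 := by
              calc (2:ℕ) = 2^1 := by norm_num
                _ ≤ 2^r1 := Nat.pow_le_pow_right (by norm_num) (by omega)
            have h1 : 2*(N^t*x^r) ≤ 2^r1*(N^t*x^r) := Nat.mul_le_mul_right _ h2r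
            have h2 : 2^r1*(N^t*x^r) = (N^t*((2*x)^r1))*x := by
              rw [hr1e, pow_succ, mul_pow]; ring
            have h3 : (2*x)^r1 ≤ N^r1 := Nat.pow_le_pow_left h2x _
            have h4 : (N^t*((2*x)^r1))*x ≤ (N^t*N^r1)*x :=
              Nat.mul_le_mul_right _ (Nat.mul_le_mul_left _ h3)
            have h5 : N^t*N^r1 = N^b1 := by
              rw [← pow_add]; congr 1; omega
            calc 2*(N^t*x^r) ≤ 2^r1*(N^t*x^r) := h1
              _ = (N^t*((2*x)^r1))*x := h2
              _ ≤ (N^t*N^r1)*x := h4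
              _ = N^b1*x := by rw [h5]
          have hx32 : 32*(r*a) ≤ x := by
            have h1 : r*a ≤ b*a := Nat.mul_le_mul_right _ (by omega)
            have h2 : 32*(b*a) ≤ 2^(b+4)*a*b*b := by
              have e1 : 2^(b+4)*a*b*b = (2^(b+4)*b)*(b*a) := by ring
              rw [e1]
              refine Nat.mul_le_mul_right _ ?_
              calc (32:ℕ) = 2^5 := by norm_num
                _ ≤ 2^(b+4) := Nat.pow_le_pow_right (by norm_num) (by omega)
                _ ≤ 2^(b+4)*b := Nat.le_mul_of_pos_right _ (by omega)
            have h5 : 2^(b+4)*a*b*b + 2*b < x := by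
              have := hxX; unfold thr at this; omega
            omega
          have key2 : 16*(N^t*(2*(r*a)*x^r1)) ≤ N^t*x^r := by
            have e1 : 16*(N^t*(2*(r*a)*x^r1)) = (32*(r*a))*(N^t*x^r1) := by ring
            have e2 : x*(N^t*x^r1) = N^t*x^r := by rw [hr1e, pow_succ]; ring
            calc 16*(N^t*(2*(r*a)*x^r1)) = (32*(r*a))*(N^t*x^r1) := e1
              _ ≤ x*(N^t*x^r1) := Nat.mul_le_mul_right _ hx32
              _ = N^t*x^r := e2
          have key3 : 16*((2*(t*a)*N^(t-1))*x^r) ≤ N^t*x^r := by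
            have h1 : 32*(t*a) ≤ N := by omega
            calc 16*((2*(t*a)*N^(t-1))*x^r) = ((32*(t*a))*N^(t-1))*x^r := by ring
              _ ≤ (N*N^(t-1))*x^r := Nat.mul_le_mul_right _ (Nat.mul_le_mul_right _ h1)
              _ = N^t*x^r := by rw [hNt]
          have key4 : (2*(t*a)*N^(t-1))*(2*(r*a)*x^r1) ≤ N^t*(2*(r*a)*x^r1) := by
            have h1 : 2*(t*a) ≤ N := by omega
            calc (2*(t*a)*N^(t-1))*(2*(r*a)*x^r1)
                ≤ (N*N^(t-1))*(2*(r*a)*x^r1) := by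
                  refine Nat.mul_le_mul_right _ (Nat.mul_le_mul_right _ h1)
              _ = N^t*(2*(r*a)*x^r1) := by rw [hNt]
          have htot : 32*((N+a)^t * (x+a-1)^r) ≤ 19*(N^b1*x) := by
            have h16_4 : 16*((2*(t*a)*N^(t-1))*(2*(r*a)*x^r1)) ≤ N^t*x^r := by
              calc 16*((2*(t*a)*N^(t-1))*(2*(r*a)*x^r1)) ≤ 16*(N^t*(2*(r*a)*x^r1)) :=
                    Nat.mul_le_mul_left _ key4
                _ ≤ N^t*x^r := key2
            have h32 := Nat.mul_le_mul_left 32 hLHS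
            omega
          have h31N : 31*N^b1 ≤ 32*(N+1-b)^b1 := by
            have h := bern2 (N+1-b) N (b-1) (by omega) (by omega) b1
            have hb1b : b1*(b-1) ≤ b*b := Nat.mul_le_mul (by omega) (by omega)
            have h1 : 32*(b1*(b-1))*N^(b1-1) ≤ N^b1 := by
              have h2 : 32*(b1*(b-1)) ≤ N := by
                have := Nat.mul_le_mul_left 32 hb1b
                omega
              calc 32*(b1*(b-1))*N^(b1-1) ≤ N*N^(b1-1) := Nat.mul_le_mul_right _ h2
                _ = N^b1 := hNb1
            have h3 := Nat.mul_le_mul_left 32 h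
            have e : 32*((N+1-b)^b1 + b1*(b-1)*N^(b1-1))
                = 32*(N+1-b)^b1 + 32*(b1*(b-1))*N^(b1-1) := by ring
            omega
          have h31x : 31*x ≤ 32*(x+1-b) := by
            have h1 : 32*b ≤ 2^(b+4)*a*b*b := by
              have e1 : 2^(b+4)*a*b*b = (2^(b+4)*a*b)*b := by ring
              rw [e1]
              refine Nat.mul_le_mul_right _ ?_
              calc (32:ℕ) = 2^5 := by norm_num
                _ ≤ 2^(b+4) := Nat.pow_le_pow_right (by norm_num) (by omega)
                _ ≤ (2^(b+4))*(a*b) := Nat.le_mul_of_pos_right _ (by positivity)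
                _ = 2^(b+4)*a*b := by ring
            have h5 : 2^(b+4)*a*b*b + 2*b < x := by
              have := hxX; unfold thr at this; omega
            omega
          have h1024 : 1024*((N+a)^t * (x+a-1)^r) ≤ 1024*((N+1-b)^b1*(x+1-b)) := by
            calc 1024*((N+a)^t * (x+a-1)^r) = 32*(32*((N+a)^t * (x+a-1)^r)) := by ring
              _ ≤ 32*(19*(N^b1*x)) := Nat.mul_le_mul_left _ htot
              _ = 608*(N^b1*x) := by ring
              _ ≤ 961*(N^b1*x) := Nat.mul_le_mul_right _ (by norm_num)
              _ = (31*N^b1)*(31*x) := by ring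
              _ ≤ (32*(N+1-b)^b1)*(32*(x+1-b)) := Nat.mul_le_mul h31N h31x
              _ = 1024*((N+1-b)^b1*(x+1-b)) := by ring
          exact Nat.le_of_mul_le_mul_left h1024 (by norm_num)
        calc (N+a).descFactorial t * m'.descFactorial r * (N+1-b)^b
              + N.descFactorial b * y^b
            ≤ ((N+a)^t*(x+a-1)^r)*(N+1-b)^b + N.descFactorial b * y^b :=
              Nat.add_le_add_right (Nat.mul_le_mul_right _ (Nat.mul_le_mul hsd hdm)) _
          _ ≤ ((N+1-b)^b1*(x+1-b))*(N+1-b)^b + N.descFactorial b * y^b :=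
              Nat.add_le_add_right (Nat.mul_le_mul_right _ hcore) _
          _ = (N+1-b)^b*((x+1-b)*(N+1-b)^b1) + N.descFactorial b * y^b := by ring
          _ ≤ N.descFactorial b*((x+1-b)*(N+1-b)^b1) + N.descFactorial b * y^b :=
              Nat.add_le_add_right (Nat.mul_le_mul_right _ hudesc) _
          _ = N.descFactorial b*(y^b + (N+1-b - y)*(N+1-b)^b1) := by rw [huy]; ring
          _ ≤ N.descFactorial b * (N+1-b)^b := Nat.mul_le_mul_left _ hstep


open Finset in
/-- common neighbourhood -/
noncomputable def cN {V : Type*} [Fintype V] (G : SimpleGraph V) (S : Finset V) : Finset V := by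
  classical exact Finset.univ.filter (fun v => ∀ u ∈ S, G.Adj u v)

lemma mem_cN {V : Type*} [Fintype V] (G : SimpleGraph V) (S : Finset V) (v : V) :
    v ∈ cN G S ↔ ∀ u ∈ S, G.Adj u v := by
  classical
  simp [cN]

open Finset in
/-- the set of pairs (A,B) forming a complete bipartite K_{a,b} in G -/
noncomputable def cpairs {V : Type*} [Fintype V] (G : SimpleGraph V) (a b : ℕ) :
    Finset (Finset V × Finset V) := by
  classical
  exact ((univ.powersetCard a) ×ˢ (univ.powersetCard b)).filter
    (fun p => ∀ u ∈ p.1, ∀ v ∈ p.2, G.Adj u v)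

lemma mem_cpairs {V : Type*} [Fintype V] (G : SimpleGraph V) (a b : ℕ)
    (p : Finset V × Finset V) :
    p ∈ cpairs G a b ↔ p.1.card = a ∧ p.2.card = b ∧ ∀ u ∈ p.1, ∀ v ∈ p.2, G.Adj u v := by
  classical
  simp [cpairs, Finset.mem_filter, Finset.mem_product, Finset.mem_powersetCard]
  tauto

open Finset in
lemma cpairs_card_eq_sum {V : Type*} [Fintype V] [DecidableEq V] (G : SimpleGraph V)
    (a b : ℕ) :
    (cpairs G a b).card = ∑ A ∈ univ.powersetCard a, ((cN G A).card.choose b) := by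
  classical
  have h3 : (cpairs G a b).card
      = ((univ.powersetCard a).sigma (fun A => (cN G A).powersetCard b)).card := by
    refine Finset.card_bij (fun p _ => ⟨p.1, p.2⟩) ?_ ?_ ?_
    · intro p hp
      rw [mem_cpairs] at hp
      simp only [Finset.mem_sigma, Finset.mem_powersetCard]
      refine ⟨by simp [Finset.mem_powersetCard, hp.1], ?_, hp.2.1⟩
      intro v hv
      rw [mem_cN]
      intro u hu
      exact hp.2.2 u hu v hv
    · intro p hp q hq hpq
      have h1 : p.1 = q.1 := congrArg Sigma.fst hpq
      have h2 : p.2 = q.2 := by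
        have := congrArg Sigma.snd hpq
        simpa using this
      exact Prod.ext h1 h2
    · rintro ⟨A, B⟩ hAB
      simp only [Finset.mem_sigma, Finset.mem_powersetCard] at hAB
      refine ⟨(A, B), ?_, rfl⟩
      rw [mem_cpairs]
      refine ⟨hAB.1.2, hAB.2.2, ?_⟩
      intro u hu v hv
      have := hAB.2.1 hv
      rw [mem_cN] at this
      exact this u hu
  rw [h3, Finset.card_sigma]
  exact Finset.sum_congr rfl (fun A _ => Finset.card_powersetCard _ _)

open Finset in
lemma core_bound {V : Type*} [Fintype V] [DecidableEq V] (G : SimpleGraph V)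
    (a b t : ℕ) (ha : 2 ≤ a) (hat : a < t) (htb : t < b)
    (hcase : a + t ≤ b ∨ (b < a + t ∧ 2 * a < b ∧ t ≤ 2 * a ∧ 2 * t - 1 ≤ a + b))
    (hfree : ∀ T : Finset V, T.card = t → (cN G T).card ≤ a)
    (hn : nstar a b + a + b ≤ Fintype.card V) :
    (cpairs G a b).card ≤ (Fintype.card V - a).choose b := by
  classical
  set n := Fintype.card V with hnn
  set N := n - a with hN
  have hNn : n = N + a := by omega
  have hNstar : nstar a b ≤ N := by omega
  -- basic facts
  have hdisj : ∀ (A : Finset V), ∀ v ∈ cN G A, v ∉ A := by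
    intro A v hv hvA
    rw [mem_cN] at hv
    exact G.loopless.irrefl v (hv v hvA)
  have hcNsub : ∀ (A : Finset V), cN G A ⊆ univ \ A := by
    intro A v hv
    simp only [Finset.mem_sdiff, Finset.mem_univ, true_and]
    exact hdisj A v hv
  have hcNle : ∀ A ∈ univ.powersetCard a, (cN G A).card ≤ N := by
    intro A hA
    rw [Finset.mem_powersetCard] at hA
    calc (cN G A).card ≤ (univ \ A).card := Finset.card_le_card (hcNsub A)
      _ = n - a := by rw [Finset.card_sdiff_of_subset (Finset.subset_univ A), hA.2, Finset.card_univ]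
  -- the family
  set 𝓐 := (univ.powersetCard a).filter (fun A => b ≤ (cN G A).card) with h𝓐
  have hsum0 : ∑ A ∈ univ.powersetCard a, ((cN G A).card.choose b)
      = ∑ A ∈ 𝓐, ((cN G A).card.choose b) := by
    rw [h𝓐]
    refine (Finset.sum_filter_of_ne ?_).symm
    intro A _ hne
    by_contra hlt
    exact hne (Nat.choose_eq_zero_of_lt (by omega))
  -- structural facts
  have f1 : ∀ A ∈ 𝓐, ∀ T ⊆ cN G A, T.card = t → cN G T = A := by
    intro A hA T hT hTcard
    rw [h𝓐, Finset.mem_filter, Finset.mem_powersetCard] at hA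
    have hsub : A ⊆ cN G T := by
      intro u hu
      rw [mem_cN]
      intro w hw
      have hw2 := hT hw
      rw [mem_cN] at hw2
      exact (hw2 u hu).symm
    have hcard : (cN G T).card ≤ A.card := by
      rw [hA.1.2]
      exact hfree T hTcard
    exact (Finset.eq_of_subset_of_card_le hsub hcard).symm
  have f2 : ∀ A ∈ 𝓐, ∀ A' ∈ 𝓐, A ≠ A' → (cN G A ∩ cN G A').card < t := by
    intro A hA A' hA' hne
    by_contra hge
    push_neg at hge
    obtain ⟨T, hTsub, hTcard⟩ := Finset.exists_subset_card_eq hge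
    have e1 := f1 A hA T (hTsub.trans Finset.inter_subset_left) hTcard
    have e2 := f1 A' hA' T (hTsub.trans Finset.inter_subset_right) hTcard
    exact hne (e1.symm.trans e2)
  have f3 : ∑ A ∈ 𝓐, ((cN G A).card.choose t) ≤ n.choose t := by
    have h1 : (𝓐.sigma (fun A => (cN G A).powersetCard t)).card
        ≤ (univ.powersetCard t : Finset (Finset V)).card := by
      refine Finset.card_le_card_of_injOn (fun p => p.2) ?_ ?_
      · intro p hp
        rw [Finset.mem_coe, Finset.mem_sigma, Finset.mem_powersetCard] at hp
        rw [Finset.mem_coe, Finset.mem_powersetCard]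
        exact ⟨Finset.subset_univ _, hp.2.2⟩
      · intro p hp q hq hpq
        simp only [Finset.coe_mem, Finset.mem_coe, Finset.mem_sigma,
          Finset.mem_powersetCard] at hp hq
        have e1 := f1 p.1 hp.1 p.2 hp.2.1 hp.2.2
        have e2 := f1 q.1 hq.1 q.2 hq.2.1 hq.2.2
        have hpq2 : p.2 = q.2 := hpq
        have hfst : p.1 = q.1 := by rw [← e1, ← e2, hpq2]
        exact Sigma.ext hfst (heq_of_eq hpq2)
    rw [Finset.card_sigma] at h1
    calc ∑ A ∈ 𝓐, ((cN G A).card.choose t)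
        = ∑ A ∈ 𝓐, ((cN G A).powersetCard t).card :=
          Finset.sum_congr rfl (fun A _ => (Finset.card_powersetCard _ _).symm)
      _ ≤ (univ.powersetCard t : Finset (Finset V)).card := h1
      _ = n.choose t := by rw [Finset.card_powersetCard, Finset.card_univ]
  -- main
  rw [cpairs_card_eq_sum, hsum0]
  rcases Finset.eq_empty_or_nonempty 𝓐 with hemp | hne
  · rw [hemp]
    simp
  obtain ⟨A₁, hA₁mem, hA₁max⟩ := Finset.exists_max_image 𝓐 (fun A => (cN G A).card) hne
  set y := (cN G A₁).card with hy
  have hA₁' : A₁.card = a ∧ b ≤ y := by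
    have := hA₁mem
    rw [h𝓐, Finset.mem_filter, Finset.mem_powersetCard] at this
    exact ⟨this.1.2, this.2⟩
  have hyN : y ≤ N := hcNle A₁ (by rw [h𝓐, Finset.mem_filter] at hA₁mem; exact hA₁mem.1)
  by_cases hyeq : y = N
  · -- x = 0 : rigidity
    have hS1 : cN G A₁ = univ \ A₁ := by
      refine Finset.eq_of_subset_of_card_le (hcNsub A₁) ?_
      rw [Finset.card_sdiff_of_subset (Finset.subset_univ _), Finset.card_univ, hA₁'.1]
      omega
    have hsingle : ∀ A ∈ 𝓐, A = A₁ := by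
      intro A hA
      by_contra hne'
      have hAmem := hA
      rw [h𝓐, Finset.mem_filter, Finset.mem_powersetCard] at hAmem
      have hinter : (cN G A ∩ cN G A₁).card < t := f2 A hA A₁ hA₁mem hne'
      have hqsplit : cN G A ⊆ (cN G A ∩ cN G A₁) ∪ (cN G A ∩ A₁) := by
        intro v hv
        by_cases hvc : v ∈ cN G A₁
        · exact Finset.mem_union_left _ (Finset.mem_inter.mpr ⟨hv, hvc⟩)
        · have hvA₁ : v ∈ A₁ := by
            have h2 : v ∉ univ \ A₁ := by rw [← hS1]; exact hvc
            simp only [Finset.mem_sdiff, Finset.mem_univ, true_and, not_not] at h2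
            exact h2
          exact Finset.mem_union_right _ (Finset.mem_inter.mpr ⟨hv, hvA₁⟩)
      set q := (cN G A ∩ A₁).card with hq
      have hdb : b ≤ (cN G A).card := hAmem.2
      have hcardle : (cN G A).card ≤ (t-1) + q := by
        calc (cN G A).card ≤ ((cN G A ∩ cN G A₁) ∪ (cN G A ∩ A₁)).card :=
              Finset.card_le_card hqsplit
          _ ≤ (cN G A ∩ cN G A₁).card + q := Finset.card_union_le _ _
          _ ≤ (t-1) + q := by omega
      have hqA₁ : q ≤ a := by
        rw [hq]
        calc (cN G A ∩ A₁).card ≤ A₁.card := Finset.card_le_card Finset.inter_subset_right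
          _ = a := hA₁'.1
      rcases hcase with hc1 | hc2
      · -- b ≥ a + t
        omega
      · -- second case : build the bad t-set
        obtain ⟨hc2a, hc2b, _, hc2d⟩ := hc2
        have hqta : t - a ≤ q := by omega
        obtain ⟨P₀, hP₀sub, hP₀card⟩ := Finset.exists_subset_card_eq hqta
        have hP₀A₁ : P₀ ⊆ A₁ := hP₀sub.trans Finset.inter_subset_right
        have hP₀cNA : P₀ ⊆ cN G A := hP₀sub.trans Finset.inter_subset_left
        have hdisjT : Disjoint A P₀ := by
          rw [Finset.disjoint_right]
          intro v hv
          exact fun hvA => hdisj A v (hP₀cNA hv) hvA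
        have hT₃card : (A ∪ P₀).card = t := by
          rw [Finset.card_union_of_disjoint hdisjT, hAmem.1.2, hP₀card]
          omega
        have hQsub : cN G A \ A₁ ⊆ cN G (A ∪ P₀) := by
          intro v hv
          rw [Finset.mem_sdiff] at hv
          rw [mem_cN]
          intro u hu
          rcases Finset.mem_union.mp hu with huA | huP
          · have h5 := hv.1
            rw [mem_cN] at h5
            exact h5 u huA
          · have hvS1 : v ∈ cN G A₁ := by
              rw [hS1, Finset.mem_sdiff]
              exact ⟨Finset.mem_univ v, hv.2⟩
            rw [mem_cN] at hvS1
            exact hvS1 u (hP₀A₁ huP)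
        have hQcard : a + 1 ≤ (cN G A \ A₁).card := by
          have h1 : (cN G A \ A₁).card ≥ (cN G A).card - q := by
            have h2 : (cN G A ∩ A₁).card + (cN G A \ A₁).card = (cN G A).card := by
              rw [Finset.card_inter_add_card_sdiff]
            omega
          omega
        have hbad := hfree (A ∪ P₀) hT₃card
        have h3 : (cN G A \ A₁).card ≤ (cN G (A ∪ P₀)).card := Finset.card_le_card hQsub
        omega
    have h𝓐single : 𝓐 = {A₁} := by
      apply Finset.eq_singleton_iff_unique_mem.mpr
      exact ⟨hA₁mem, hsingle⟩
    rw [h𝓐single, Finset.sum_singleton]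
    rw [← hy, hyeq]
  · -- x ≥ 1 : counting
    set x := N - y with hx
    have hx1 : 1 ≤ x := by omega
    have hyx : y + x = N := by omega
    set r := b - t with hrdef
    set m' := min (y - t) (x + a - 1) with hm'def
    -- star in choose form
    have hstarC : n.choose t * m'.choose r + b.choose t * (y.choose b)
        ≤ b.choose t * (N.choose b) := by
      have hdesc := star a b t N y x ha hat htb hNstar hA₁'.2 hyx hx1
      have hfac : 0 < t.factorial * r.factorial :=
        Nat.mul_pos (Nat.factorial_pos _) (Nat.factorial_pos _)
      refine Nat.le_of_mul_le_mul_right ?_ hfac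
      have e1 : n.choose t * m'.choose r * (t.factorial * r.factorial)
          = n.descFactorial t * m'.descFactorial r := by
        rw [Nat.descFactorial_eq_factorial_mul_choose n t,
          Nat.descFactorial_eq_factorial_mul_choose m' r]
        ring
      have ebt : b.choose t * t.factorial * r.factorial = b.factorial := by
        have := Nat.choose_mul_factorial_mul_factorial (le_of_lt htb)
        rw [hrdef]
        exact this
      have e2 : b.choose t * (y.choose b) * (t.factorial * r.factorial)
          = y.descFactorial b := by
        rw [Nat.descFactorial_eq_factorial_mul_choose y b, ← ebt]
        ring
      have e3 : b.choose t * (N.choose b) * (t.factorial * r.factorial)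
          = N.descFactorial b := by
        rw [Nat.descFactorial_eq_factorial_mul_choose N b, ← ebt]
        ring
      calc (n.choose t * m'.choose r + b.choose t * (y.choose b)) * (t.factorial * r.factorial)
          = n.choose t * m'.choose r * (t.factorial * r.factorial)
            + b.choose t * (y.choose b) * (t.factorial * r.factorial) := by ring
        _ = n.descFactorial t * m'.descFactorial r + y.descFactorial b := by rw [e1, e2]
        _ ≤ N.descFactorial b := by
            have e4 : n = N + a := hNn
            rw [e4] at *
            exact hdesc
        _ = b.choose t * (N.choose b) * (t.factorial * r.factorial) := e3.symm
    -- bound the sum over 𝓐 \ {A₁}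
    have hsum1 : ∑ A ∈ 𝓐.erase A₁, ((cN G A).card.choose b) + y.choose b
        = ∑ A ∈ 𝓐, ((cN G A).card.choose b) := Finset.sum_erase_add 𝓐 _ hA₁mem
    have hperA : ∀ A ∈ 𝓐.erase A₁,
        ((cN G A).card.choose b) * b.choose t ≤ ((cN G A).card.choose t) * m'.choose r := by
      intro A hA
      obtain ⟨hAne, hAmem⟩ := Finset.mem_erase.mp hA
      have hAmem' := hAmem
      rw [h𝓐, Finset.mem_filter, Finset.mem_powersetCard] at hAmem'
      set dA := (cN G A).card with hdA
      have hdA1 : dA ≤ y := hA₁max A hAmem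
      have hdA2 : dA ≤ (t-1) + (a + x) := by
        have hsplit : cN G A ⊆ (cN G A ∩ cN G A₁) ∪ (cN G A \ cN G A₁) := by
          intro v hv
          by_cases hvc : v ∈ cN G A₁
          · exact Finset.mem_union_left _ (Finset.mem_inter.mpr ⟨hv, hvc⟩)
          · exact Finset.mem_union_right _ (Finset.mem_sdiff.mpr ⟨hv, hvc⟩)
        have h1 : (cN G A ∩ cN G A₁).card < t := f2 A hAmem A₁ hA₁mem hAne
        have h2 : (cN G A \ cN G A₁).card ≤ n - y := by
          calc (cN G A \ cN G A₁).card ≤ (univ \ cN G A₁).card := by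
                refine Finset.card_le_card ?_
                intro v hv
                rw [Finset.mem_sdiff] at hv ⊢
                exact ⟨Finset.mem_univ v, hv.2⟩
            _ = n - y := by
                rw [Finset.card_sdiff_of_subset (Finset.subset_univ _), Finset.card_univ, ← hy]
        calc dA ≤ ((cN G A ∩ cN G A₁) ∪ (cN G A \ cN G A₁)).card :=
              Finset.card_le_card hsplit
          _ ≤ (cN G A ∩ cN G A₁).card + (cN G A \ cN G A₁).card := Finset.card_union_le _ _
          _ ≤ (t-1) + (a + x) := by omega
      have hdAm : dA - t ≤ m' := by
        rw [hm'def]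
        exact le_min (by omega) (by omega)
      have hbdA : b ≤ dA := hAmem'.2
      calc dA.choose b * b.choose t = dA.choose t * (dA - t).choose (b - t) :=
            Nat.choose_mul (le_of_lt htb)
        _ ≤ dA.choose t * m'.choose r := by
            rw [hrdef]
            exact Nat.mul_le_mul_left _ (Nat.choose_le_choose _ hdAm)
    have hsum2 : (∑ A ∈ 𝓐.erase A₁, ((cN G A).card.choose b)) * b.choose t
        ≤ n.choose t * m'.choose r := by
      calc (∑ A ∈ 𝓐.erase A₁, ((cN G A).card.choose b)) * b.choose t
          = ∑ A ∈ 𝓐.erase A₁, ((cN G A).card.choose b) * b.choose t := by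
            rw [Finset.sum_mul]
        _ ≤ ∑ A ∈ 𝓐.erase A₁, ((cN G A).card.choose t) * m'.choose r :=
            Finset.sum_le_sum hperA
        _ = (∑ A ∈ 𝓐.erase A₁, ((cN G A).card.choose t)) * m'.choose r := by
            rw [Finset.sum_mul]
        _ ≤ n.choose t * m'.choose r := by
            refine Nat.mul_le_mul_right _ ?_
            refine le_trans (Finset.sum_le_sum_of_subset (Finset.erase_subset _ _)) f3
    -- combine
    have hbtpos : 0 < b.choose t := Nat.choose_pos (le_of_lt htb)
    have hfinal : (∑ A ∈ 𝓐, ((cN G A).card.choose b)) * b.choose t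
        ≤ N.choose b * b.choose t := by
      calc (∑ A ∈ 𝓐, ((cN G A).card.choose b)) * b.choose t
          = (∑ A ∈ 𝓐.erase A₁, ((cN G A).card.choose b)) * b.choose t
            + (y.choose b) * b.choose t := by rw [← hsum1]; ring
        _ ≤ n.choose t * m'.choose r + (y.choose b) * b.choose t :=
            Nat.add_le_add_right hsum2 _
        _ ≤ b.choose t * (N.choose b) := by
            have e : (y.choose b) * b.choose t = b.choose t * (y.choose b) := by ring
            omega
        _ = N.choose b * b.choose t := by ring
    exact Nat.le_of_mul_le_mul_right hfinal hbtpos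

open Finset in
lemma exists_T_of_contains {V : Type*} [Fintype V] [DecidableEq V] (G : SimpleGraph V)
    (s u : ℕ) (h : ContainsCopy (Kbip s u) G) :
    ∃ T : Finset V, T.card = u ∧ s ≤ (cN G T).card := by
  obtain ⟨f, hf⟩ := h
  have hinjR : Function.Injective (fun j : Fin u => f (Sum.inr j)) :=
    fun i j hij => Sum.inr_injective (hf hij)
  have hinjL : Function.Injective (fun i : Fin s => f (Sum.inl i)) :=
    fun i j hij => Sum.inl_injective (hf hij)
  refine ⟨(univ : Finset (Fin u)).image (fun j => f (Sum.inr j)), ?_, ?_⟩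
  · rw [Finset.card_image_of_injective _ hinjR, Finset.card_univ, Fintype.card_fin]
  · have hsub : (univ : Finset (Fin s)).image (fun i => f (Sum.inl i))
        ⊆ cN G ((univ : Finset (Fin u)).image (fun j => f (Sum.inr j))) := by
      intro v hv
      rw [Finset.mem_image] at hv
      obtain ⟨i, _, rfl⟩ := hv
      rw [mem_cN]
      intro w hw
      rw [Finset.mem_image] at hw
      obtain ⟨j, _, rfl⟩ := hw
      refine f.map_rel ?_
      simp
    calc s = ((univ : Finset (Fin s)).image (fun i => f (Sum.inl i))).card := by
          rw [Finset.card_image_of_injective _ hinjL, Finset.card_univ, Fintype.card_fin]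
      _ ≤ (cN G _).card := Finset.card_le_card hsub
lemma contains_of_T {V : Type*} [Fintype V] [DecidableEq V] (G : SimpleGraph V)
    (s u : ℕ) (T : Finset V) (hT : T.card = u) (hcN : s ≤ (cN G T).card) :
    ContainsCopy (Kbip s u) G := by
  obtain ⟨S, hSsub, hScard⟩ := Finset.exists_subset_card_eq hcN
  have eS := Finset.equivFinOfCardEq hScard
  have eT := Finset.equivFinOfCardEq hT
  have hdisj : ∀ v, v ∈ S → v ∈ T → False := by
    intro v hvS hvT
    have h2 := hSsub hvS
    rw [mem_cN] at h2
    exact G.loopless.irrefl v (h2 v hvT)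
  refine ⟨⟨Sum.elim (fun i => (eS.symm i : V)) (fun j => (eT.symm j : V)), ?_⟩, ?_⟩
  · intro p q hpq
    rcases p with i | i <;> rcases q with j | j <;>
      simp only [Sum.elim_inl, Sum.elim_inr]
    · simp at hpq
    · have h1 := hSsub (eS.symm i).2
      rw [mem_cN] at h1
      exact (h1 _ (eT.symm j).2).symm
    · have h1 := hSsub (eS.symm j).2
      rw [mem_cN] at h1
      exact h1 _ (eT.symm i).2
    · simp at hpq
  · intro p q hpq
    have hpq' : Sum.elim (fun i => ((eS.symm i : V))) (fun j => ((eT.symm j : V))) p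
        = Sum.elim (fun i => ((eS.symm i : V))) (fun j => ((eT.symm j : V))) q := hpq
    clear hpq
    rcases p with i | i <;> rcases q with j | j <;>
      simp only [Sum.elim_inl, Sum.elim_inr] at hpq'
    · exact congrArg Sum.inl (eS.symm.injective (Subtype.ext hpq'))
    · have h1 : (eS.symm i : V) ∈ T := by rw [hpq']; exact (eT.symm j).2
      exact ((hdisj _ (eS.symm i).2 h1)).elim
    · have h1 : (eS.symm j : V) ∈ T := by rw [← hpq']; exact (eT.symm i).2
      exact ((hdisj _ (eS.symm j).2 h1)).elim
    · exact congrArg Sum.inr (eT.symm.injective (Subtype.ext hpq'))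

lemma not_contains_iff_free {V : Type*} [Fintype V] [DecidableEq V] (G : SimpleGraph V)
    (a t : ℕ) :
    ¬ ContainsCopy (Kbip (a+1) t) G ↔ ∀ T : Finset V, T.card = t → (cN G T).card ≤ a := by
  constructor
  · intro h T hT
    by_contra hgt
    exact h (contains_of_T G (a+1) t T hT (by omega))
  · intro h hc
    obtain ⟨T, hT, hcN⟩ := exists_T_of_contains G (a+1) t hc
    have := h T hT
    omega

lemma containsCopy_comap {α U V : Type*} (F : SimpleGraph α) (G : SimpleGraph V) (e : U ≃ V)
    (h : ContainsCopy F (G.comap e)) : ContainsCopy F G := by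
  obtain ⟨f, hf⟩ := h
  refine ⟨⟨fun x => e (f x), ?_⟩, ?_⟩
  · intro p q hpq
    exact f.map_rel hpq
  · intro p q hpq
    exact hf (e.injective hpq)

open Finset in
lemma cpairs_comap_card {U V : Type*} [Fintype U] [Fintype V] [DecidableEq U] [DecidableEq V]
    (G : SimpleGraph V) (e : U ≃ V) (a b : ℕ) :
    (cpairs (G.comap e) a b).card = (cpairs G a b).card := by
  classical
  refine Finset.card_bij (fun p _ => (p.1.image e, p.2.image e)) ?_ ?_ ?_
  · intro p hp
    rw [mem_cpairs] at hp ⊢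
    refine ⟨by rw [Finset.card_image_of_injective _ e.injective]; exact hp.1,
      by rw [Finset.card_image_of_injective _ e.injective]; exact hp.2.1, ?_⟩
    intro u hu v hv
    rw [Finset.mem_image] at hu hv
    obtain ⟨u', hu', rfl⟩ := hu
    obtain ⟨v', hv', rfl⟩ := hv
    exact hp.2.2 u' hu' v' hv'
  · intro p hp q hq hpq
    have h1 := congrArg Prod.fst hpq
    have h2 := congrArg Prod.snd hpq
    simp only at h1 h2
    exact Prod.ext (Finset.image_injective e.injective h1)
      (Finset.image_injective e.injective h2)
  · rintro ⟨A, B⟩ hAB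
    rw [mem_cpairs] at hAB
    refine ⟨(A.image e.symm, B.image e.symm), ?_, ?_⟩
    · rw [mem_cpairs]
      refine ⟨by rw [Finset.card_image_of_injective _ e.symm.injective]; exact hAB.1,
        by rw [Finset.card_image_of_injective _ e.symm.injective]; exact hAB.2.1, ?_⟩
      intro u hu v hv
      rw [Finset.mem_image] at hu hv
      obtain ⟨u', hu', rfl⟩ := hu
      obtain ⟨v', hv', rfl⟩ := hv
      simp only [SimpleGraph.comap_adj, Equiv.apply_symm_apply]
      exact hAB.2.2 u' hu' v' hv'
    · simp only [Prod.mk.injEq]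
      constructor <;>
      · rw [Finset.image_image]
        simp [Finset.image_id']

open Finset in
lemma K_free (a m t : ℕ) (hat : a < t) :
    ∀ T : Finset (Fin a ⊕ Fin m), T.card = t → (cN (Kbip a m) T).card ≤ a := by
  intro T hT
  by_cases hR : ∃ u ∈ T, ∃ j : Fin m, u = Sum.inr j
  · obtain ⟨u, huT, j, rfl⟩ := hR
    have hsub : cN (Kbip a m) T ⊆ (univ : Finset (Fin a)).image Sum.inl := by
      intro v hv
      rw [mem_cN] at hv
      have := hv _ huT
      rcases v with i | i
      · exact Finset.mem_image.mpr ⟨i, Finset.mem_univ i, rfl⟩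
      · simp at this
    calc (cN (Kbip a m) T).card ≤ ((univ : Finset (Fin a)).image Sum.inl).card :=
          Finset.card_le_card hsub
      _ = a := by
          rw [Finset.card_image_of_injective _ Sum.inl_injective, Finset.card_univ,
            Fintype.card_fin]
  · push_neg at hR
    have hsub : T ⊆ (univ : Finset (Fin a)).image Sum.inl := by
      intro u hu
      rcases u with i | j
      · exact Finset.mem_image.mpr ⟨i, Finset.mem_univ i, rfl⟩
      · exact absurd rfl (hR _ hu j)
    have : T.card ≤ a := by
      calc T.card ≤ ((univ : Finset (Fin a)).image Sum.inl).card := Finset.card_le_card hsub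
        _ = a := by
            rw [Finset.card_image_of_injective _ Sum.inl_injective, Finset.card_univ,
              Fintype.card_fin]
    omega

open Finset in
lemma K_count (a m b : ℕ) (ha : 1 ≤ a) (hab : a < b) (hbm : b ≤ m) :
    (cpairs (Kbip a m) a b).card = m.choose b := by
  classical
  have hL : ((univ : Finset (Fin a)).image Sum.inl : Finset (Fin a ⊕ Fin m)).card = a := by
    rw [Finset.card_image_of_injective _ Sum.inl_injective, Finset.card_univ, Fintype.card_fin]
  have h := Finset.card_bij
    (fun (B₀ : Finset (Fin m)) (_ : B₀ ∈ univ.powersetCard b) =>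
      (((univ : Finset (Fin a)).image Sum.inl : Finset (Fin a ⊕ Fin m)), B₀.image Sum.inr))
    (s := (univ : Finset (Fin m)).powersetCard b) (t := cpairs (Kbip a m) a b)
    ?_ ?_ ?_
  · rw [← h, Finset.card_powersetCard, Finset.card_univ, Fintype.card_fin]
  · intro B₀ hB₀
    rw [Finset.mem_powersetCard] at hB₀
    rw [mem_cpairs]
    refine ⟨hL, by rw [Finset.card_image_of_injective _ Sum.inr_injective]; exact hB₀.2, ?_⟩
    intro u hu v hv
    rw [Finset.mem_image] at hu hv
    obtain ⟨i, _, rfl⟩ := hu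
    obtain ⟨j, _, rfl⟩ := hv
    simp
  · intro B₀ _ B₁ _ hBB
    have := congrArg Prod.snd hBB
    simp only at this
    exact Finset.image_injective Sum.inr_injective this
  · rintro ⟨A, B⟩ hAB
    rw [mem_cpairs] at hAB
    obtain ⟨hA, hB, hadj⟩ := hAB
    dsimp only at hA hB hadj
    -- A = lefts
    have hAL : A ⊆ (univ : Finset (Fin a)).image Sum.inl := by
      intro u hu
      rcases u with i | j
      · exact Finset.mem_image.mpr ⟨i, Finset.mem_univ i, rfl⟩
      · exfalso
        have hBL : B ⊆ (univ : Finset (Fin a)).image Sum.inl := by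
          intro v hv
          have := hadj _ hu _ hv
          rcases v with i' | j'
          · exact Finset.mem_image.mpr ⟨i', Finset.mem_univ i', rfl⟩
          · simp at this
        have : B.card ≤ a := by
          calc B.card ≤ _ := Finset.card_le_card hBL
            _ = a := hL
        omega
    have hAeq : A = (univ : Finset (Fin a)).image Sum.inl :=
      Finset.eq_of_subset_of_card_le hAL (by rw [hL, hA])
    -- B ⊆ rights
    have hBR : ∀ v ∈ B, ∃ j : Fin m, v = Sum.inr j := by
      intro v hv
      have hApos : 0 < A.card := by omega
      obtain ⟨u0, hu0⟩ := Finset.card_pos.mp hApos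
      have hu0' := hAL hu0
      rw [Finset.mem_image] at hu0'
      obtain ⟨i0, _, hui⟩ := hu0'
      have := hadj _ (hui ▸ hu0) _ hv
      rcases v with i | j
      · simp at this
      · exact ⟨j, rfl⟩
    have himg : ((univ : Finset (Fin m)).filter (fun j => Sum.inr j ∈ B)).image Sum.inr = B := by
      ext v
      rw [Finset.mem_image]
      constructor
      · rintro ⟨j, hj, rfl⟩
        exact (Finset.mem_filter.mp hj).2
      · intro hv
        obtain ⟨j, rfl⟩ := hBR v hv
        exact ⟨j, Finset.mem_filter.mpr ⟨Finset.mem_univ _, hv⟩, rfl⟩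
    refine ⟨(univ : Finset (Fin m)).filter (fun j => Sum.inr j ∈ B), ?_, ?_⟩
    · rw [Finset.mem_powersetCard]
      refine ⟨Finset.subset_univ _, ?_⟩
      have h2 : (((univ : Finset (Fin m)).filter (fun j => Sum.inr j ∈ B)).image
          (Sum.inr : Fin m → Fin a ⊕ Fin m)).card
          = ((univ : Finset (Fin m)).filter (fun j => Sum.inr j ∈ B)).card :=
        Finset.card_image_of_injective _ Sum.inr_injective
      rw [himg] at h2
      omega
    · rw [Prod.mk.injEq]
      exact ⟨hAeq.symm, himg⟩

open Finset in
/-- the subgraph associated to a pair of disjoint vertex sets -/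
def pairSub {V : Type*} [DecidableEq V] (G : SimpleGraph V) (p : Finset V × Finset V) :
    G.Subgraph where
  verts := ↑(p.1 ∪ p.2)
  Adj u v := ((u ∈ p.1 ∧ v ∈ p.2) ∨ (u ∈ p.2 ∧ v ∈ p.1)) ∧ G.Adj u v
  adj_sub h := h.2
  edge_vert h := by
    rcases h.1 with ⟨h1, _⟩ | ⟨h1, _⟩ <;>
      simp only [Finset.coe_union, Set.mem_union, Finset.mem_coe] <;> tauto
  symm := ⟨fun u v h => by
    refine ⟨?_, h.2.symm⟩
    rcases h.1 with ⟨h1, h2⟩ | ⟨h1, h2⟩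
    · exact Or.inr ⟨h2, h1⟩
    · exact Or.inl ⟨h2, h1⟩⟩

lemma pairSub_adj {V : Type*} [DecidableEq V] (G : SimpleGraph V) (p : Finset V × Finset V)
    (u v : V) : (pairSub G p).Adj u v ↔
      (((u ∈ p.1 ∧ v ∈ p.2) ∨ (u ∈ p.2 ∧ v ∈ p.1)) ∧ G.Adj u v) := Iff.rfl

lemma cpairs_disjoint {V : Type*} [Fintype V] (G : SimpleGraph V) {a b : ℕ}
    {p : Finset V × Finset V} (hp : p ∈ cpairs G a b) : Disjoint p.1 p.2 := by
  rw [mem_cpairs] at hp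
  rw [Finset.disjoint_left]
  intro v hv1 hv2
  exact G.loopless.irrefl v (hp.2.2 v hv1 v hv2)

open Finset in
lemma pairSub_iso {V : Type*} [Fintype V] [DecidableEq V] (G : SimpleGraph V) {a b : ℕ}
    {p : Finset V × Finset V} (hp : p ∈ cpairs G a b) :
    Nonempty ((Kbip a b) ≃g (pairSub G p).coe) := by
  classical
  have hp' := hp
  rw [mem_cpairs] at hp'
  obtain ⟨hA, hB, hadj⟩ := hp'
  have hdisj := cpairs_disjoint G hp
  have eA := (Finset.equivFinOfCardEq hA).symm
  have eB := (Finset.equivFinOfCardEq hB).symm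
  have hmem1 : ∀ (i : Fin a), ((eA i : V)) ∈ (↑(p.1 ∪ p.2) : Set V) := by
    intro i
    simp only [Finset.coe_union, Set.mem_union, Finset.mem_coe]
    exact Or.inl (eA i).2
  have hmem2 : ∀ (j : Fin b), ((eB j : V)) ∈ (↑(p.1 ∪ p.2) : Set V) := by
    intro j
    simp only [Finset.coe_union, Set.mem_union, Finset.mem_coe]
    exact Or.inr (eB j).2
  have hmem2' : ∀ (v : {x : V // x ∈ (↑(p.1 ∪ p.2) : Set V)}), (v : V) ∉ p.1 → (v : V) ∈ p.2 := by
    intro v hv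
    have := v.2
    simp only [Finset.coe_union, Set.mem_union, Finset.mem_coe] at this
    tauto
  refine ⟨⟨⟨Sum.elim (fun i => ⟨(eA i : V), hmem1 i⟩) (fun j => ⟨(eB j : V), hmem2 j⟩),
    fun v => if h : (v : V) ∈ p.1 then Sum.inl (eA.symm ⟨(v : V), h⟩)
      else Sum.inr (eB.symm ⟨(v : V), hmem2' v h⟩), ?_, ?_⟩, ?_⟩⟩
  · -- left inverse
    intro z
    rcases z with i | j
    · simp only [Sum.elim_inl]
      refine (dif_pos (eA i).2).trans ?_
      congr 1
      exact eA.symm_apply_apply i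
    · simp only [Sum.elim_inr]
      have hnot : (eB j : V) ∉ p.1 := by
        intro hmem
        exact Finset.disjoint_left.mp hdisj hmem (eB j).2
      refine (dif_neg hnot).trans ?_
      congr 1
      exact eB.symm_apply_apply j
  · -- right inverse
    intro v
    dsimp only
    by_cases h : (v : V) ∈ p.1
    · rw [dif_pos h]
      simp only [Sum.elim_inl]
      apply Subtype.ext
      simp only
      exact congrArg Subtype.val (eA.apply_symm_apply ⟨(v : V), h⟩)
    · rw [dif_neg h]
      simp only [Sum.elim_inr]
      apply Subtype.ext
      simp only
      exact congrArg Subtype.val (eB.apply_symm_apply ⟨(v : V), hmem2' v h⟩)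
  · -- map_rel_iff
    intro z w
    rcases z with i | i <;> rcases w with j | j <;>
      simp only [Equiv.coe_fn_mk, Sum.elim_inl, Sum.elim_inr,
        SimpleGraph.Subgraph.coe_adj, completeBipartiteGraph_adj,
        Sum.isLeft_inl, Sum.isRight_inl, Sum.isLeft_inr, Sum.isRight_inr,
        true_and, and_true, false_and, and_false, false_or, or_false]
    · -- inl inl : both sides false
      rw [pairSub_adj]
      constructor
      · rintro ⟨⟨h1, h2⟩ | ⟨h1, h2⟩, _⟩
        · exact absurd h2 (fun h => Finset.disjoint_left.mp hdisj (eA j).2 h)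
        · exact absurd h1 (fun h => Finset.disjoint_left.mp hdisj (eA i).2 h)
      · simp
    · -- inl inr : both true
      rw [pairSub_adj]
      constructor
      · intro _; trivial
      · intro _
        exact ⟨Or.inl ⟨(eA i).2, (eB j).2⟩, hadj _ (eA i).2 _ (eB j).2⟩
    · -- inr inl
      rw [pairSub_adj]
      constructor
      · intro _; trivial
      · intro _
        exact ⟨Or.inr ⟨(eB i).2, (eA j).2⟩, (hadj _ (eA j).2 _ (eB i).2).symm⟩
    · -- inr inr : both false
      rw [pairSub_adj]
      constructor
      · rintro ⟨⟨h1, h2⟩ | ⟨h1, h2⟩, _⟩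
        · exact absurd h1 (fun h => Finset.disjoint_left.mp hdisj h (eB i).2)
        · exact absurd h2 (fun h => Finset.disjoint_left.mp hdisj h (eB j).2)
      · simp

open Finset in
open scoped Classical in
lemma cpairs_char {V : Type*} [Fintype V] [DecidableEq V] (G : SimpleGraph V) {a b : ℕ}
    (hab : a ≠ b) {r : Finset V × Finset V} (hr : r ∈ cpairs G a b) :
    r.1 = (r.1 ∪ r.2).filter
      (fun v => ((r.1 ∪ r.2).filter (fun w => (pairSub G r).Adj v w)).card = b) := by
  have hr' := hr
  rw [mem_cpairs] at hr'
  obtain ⟨hA, hB, hadj⟩ := hr'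
  have hdisj := cpairs_disjoint G hr
  ext v
  rw [Finset.mem_filter]
  constructor
  · intro hv
    refine ⟨Finset.mem_union_left _ hv, ?_⟩
    have : (r.1 ∪ r.2).filter (fun w => (pairSub G r).Adj v w) = r.2 := by
      ext w
      rw [Finset.mem_filter, pairSub_adj]
      constructor
      · rintro ⟨_, ⟨h1, h2⟩ | ⟨h1, h2⟩, _⟩
        · exact h2
        · exact absurd h1 (Finset.disjoint_left.mp hdisj hv)
      · intro hw
        exact ⟨Finset.mem_union_right _ hw, Or.inl ⟨hv, hw⟩, hadj v hv w hw⟩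
    rw [this, hB]
  · rintro ⟨hvU, hcard⟩
    by_contra hv1
    have hv2 : v ∈ r.2 := by
      rcases Finset.mem_union.mp hvU with h | h
      · exact absurd h hv1
      · exact h
    have : (r.1 ∪ r.2).filter (fun w => (pairSub G r).Adj v w) = r.1 := by
      ext w
      rw [Finset.mem_filter, pairSub_adj]
      constructor
      · rintro ⟨_, ⟨h1, h2⟩ | ⟨h1, h2⟩, _⟩
        · exact absurd h1 hv1
        · exact h2
      · intro hw
        exact ⟨Finset.mem_union_left _ hw, Or.inr ⟨hv2, hw⟩, (hadj w hw v hv2).symm⟩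
    rw [this, hA] at hcard
    exact hab hcard

open Finset in
lemma pairSub_injOn {V : Type*} [Fintype V] [DecidableEq V] (G : SimpleGraph V) {a b : ℕ}
    (hab : a ≠ b) {p q : Finset V × Finset V}
    (hp : p ∈ cpairs G a b) (hq : q ∈ cpairs G a b)
    (h : pairSub G p = pairSub G q) : p = q := by
  classical
  have hverts : (↑(p.1 ∪ p.2) : Set V) = ↑(q.1 ∪ q.2) := congrArg SimpleGraph.Subgraph.verts h
  have hU : p.1 ∪ p.2 = q.1 ∪ q.2 := Finset.coe_injective hverts
  have hAdj : (pairSub G p).Adj = (pairSub G q).Adj := congrArg SimpleGraph.Subgraph.Adj h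
  have h1 : p.1 = q.1 := by
    rw [cpairs_char G hab hp, cpairs_char G hab hq, hU, hAdj]
  have h2 : p.2 = q.2 := by
    have e1 : (p.1 ∪ p.2) \ p.1 = p.2 := Finset.union_sdiff_cancel_left (cpairs_disjoint G hp)
    have e2 : (q.1 ∪ q.2) \ q.1 = q.2 := Finset.union_sdiff_cancel_left (cpairs_disjoint G hq)
    rw [← e1, ← e2, hU, h1]
  exact Prod.ext h1 h2

open Finset in
lemma pairSub_surj {V : Type*} [Fintype V] [DecidableEq V] (G : SimpleGraph V) {a b : ℕ}
    (G' : G.Subgraph) (φ : (Kbip a b) ≃g G'.coe) :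
    ∃ p ∈ cpairs G a b, pairSub G p = G' := by
  classical
  set A := (univ : Finset (Fin a)).image (fun i => ((φ (Sum.inl i) : G'.verts) : V)) with hAdef
  set B := (univ : Finset (Fin b)).image (fun j => ((φ (Sum.inr j) : G'.verts) : V)) with hBdef
  have hinjA : Function.Injective (fun i : Fin a => ((φ (Sum.inl i) : G'.verts) : V)) :=
    fun i j hij => Sum.inl_injective (φ.toEquiv.injective (Subtype.ext hij))
  have hinjB : Function.Injective (fun j : Fin b => ((φ (Sum.inr j) : G'.verts) : V)) :=
    fun i j hij => Sum.inr_injective (φ.toEquiv.injective (Subtype.ext hij))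
  have hAcard : A.card = a := by
    rw [hAdef, Finset.card_image_of_injective _ hinjA, Finset.card_univ, Fintype.card_fin]
  have hBcard : B.card = b := by
    rw [hBdef, Finset.card_image_of_injective _ hinjB, Finset.card_univ, Fintype.card_fin]
  have hABadj : ∀ u ∈ A, ∀ v ∈ B, G'.Adj u v := by
    intro u hu v hv
    rw [hAdef, Finset.mem_image] at hu
    rw [hBdef, Finset.mem_image] at hv
    obtain ⟨i, _, rfl⟩ := hu
    obtain ⟨j, _, rfl⟩ := hv
    have : G'.coe.Adj (φ (Sum.inl i)) (φ (Sum.inr j)) := φ.map_rel_iff.mpr (by simp)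
    exact this
  have hmem : (A, B) ∈ cpairs G a b := by
    rw [mem_cpairs]
    exact ⟨hAcard, hBcard, fun u hu v hv => G'.adj_sub (hABadj u hu v hv)⟩
  refine ⟨(A, B), hmem, ?_⟩
  apply SimpleGraph.Subgraph.ext
  · -- verts
    apply Set.ext
    intro v
    constructor
    · intro hv
      simp only [pairSub, Finset.coe_union, Set.mem_union, Finset.mem_coe] at hv
      rcases hv with hv | hv
      · rw [hAdef, Finset.mem_image] at hv
        obtain ⟨i, _, rfl⟩ := hv
        exact (φ (Sum.inl i)).2
      · rw [hBdef, Finset.mem_image] at hv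
        obtain ⟨j, _, rfl⟩ := hv
        exact (φ (Sum.inr j)).2
    · intro hv
      simp only [pairSub, Finset.coe_union, Set.mem_union, Finset.mem_coe]
      obtain ⟨z, hz⟩ : ∃ z, φ z = ⟨v, hv⟩ := φ.toEquiv.surjective ⟨v, hv⟩
      rcases z with i | j
      · left
        rw [hAdef, Finset.mem_image]
        exact ⟨i, Finset.mem_univ i, by rw [hz]⟩
      · right
        rw [hBdef, Finset.mem_image]
        exact ⟨j, Finset.mem_univ j, by rw [hz]⟩
  · -- Adj
    funext u v
    apply propext
    rw [pairSub_adj]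
    constructor
    · rintro ⟨⟨hu, hv⟩ | ⟨hu, hv⟩, _⟩
      · exact hABadj u hu v hv
      · exact (hABadj v hv u hu).symm
    · intro hGadj
      have hu : u ∈ G'.verts := G'.edge_vert hGadj
      have hv : v ∈ G'.verts := G'.edge_vert hGadj.symm
      obtain ⟨z1, hz1⟩ : ∃ z, φ z = ⟨u, hu⟩ := φ.toEquiv.surjective ⟨u, hu⟩
      obtain ⟨z2, hz2⟩ : ∃ z, φ z = ⟨v, hv⟩ := φ.toEquiv.surjective ⟨v, hv⟩
      have hcoe : G'.coe.Adj (φ z1) (φ z2) := by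
        rw [hz1, hz2]
        exact hGadj
      have hKadj : (Kbip a b).Adj z1 z2 := φ.map_rel_iff.mp hcoe
      have hGA : G.Adj u v := G'.adj_sub hGadj
      rcases z1 with i | i <;> rcases z2 with j | j
      · simp at hKadj
      · refine ⟨Or.inl ⟨?_, ?_⟩, hGA⟩
        · rw [hAdef, Finset.mem_image]
          exact ⟨i, Finset.mem_univ i, by rw [hz1]⟩
        · rw [hBdef, Finset.mem_image]
          exact ⟨j, Finset.mem_univ j, by rw [hz2]⟩
      · refine ⟨Or.inr ⟨?_, ?_⟩, hGA⟩
        · rw [hBdef, Finset.mem_image]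
          exact ⟨i, Finset.mem_univ i, by rw [hz1]⟩
        · rw [hAdef, Finset.mem_image]
          exact ⟨j, Finset.mem_univ j, by rw [hz2]⟩
      · simp at hKadj

open Finset in
lemma copyCount_eq_cpairs {V : Type*} [Fintype V] [DecidableEq V] (G : SimpleGraph V)
    {a b : ℕ} (hab : a ≠ b) :
    _root_.copyCount (Kbip a b) G = (cpairs G a b).card := by
  classical
  have hbij : Function.Bijective
      (fun p : {p // p ∈ cpairs G a b} =>
        (⟨pairSub G p.1, pairSub_iso G p.2⟩ :
          {G' : G.Subgraph // Nonempty ((Kbip a b) ≃g G'.coe)})) := by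
    constructor
    · intro p q h
      exact Subtype.ext (pairSub_injOn G hab p.2 q.2 (congrArg Subtype.val h))
    · rintro ⟨G', hiso⟩
      obtain ⟨p, hp, heq⟩ := pairSub_surj G G' hiso.some
      exact ⟨⟨p, hp⟩, Subtype.ext heq⟩
  have e := Equiv.ofBijective _ hbij
  rw [_root_.copyCount, ← Nat.card_congr e]
  rw [Nat.card_eq_fintype_card, Fintype.card_coe]

end Stmt3Aux

open Stmt3Aux in
/-- if `2 ≤ a < t < b` and either `b ≥ a + t`, or (`b < a + t`, `b > 2a`,
`t ≤ 2a` and `a + b ≥ 2t - 1`), then for large `n`,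
`ex(n, K_{a,b}, K_{a+1,t}) = N(K_{a,b}, K_{a,n-a})`. -/
theorem stmt3 (a b t : ℕ) (ha : 2 ≤ a) (hat : a < t) (htb : t < b)
    (hcase : a + t ≤ b ∨ (b < a + t ∧ 2 * a < b ∧ t ≤ 2 * a ∧ 2 * t - 1 ≤ a + b)) :
    ∃ n₀ : ℕ, ∀ n ≥ n₀,
      exGen n (Kbip a b) (Kbip (a + 1) t) = _root_.copyCount (Kbip a b) (Kbip a (n - a)) := by
  classical
  refine ⟨nstar a b + 4*a + 4*b + 4, ?_⟩
  intro n hn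
  have hab : a ≠ b := by omega
  have hRHS : _root_.copyCount (Kbip a b) (Kbip a (n-a)) = (n - a).choose b := by
    rw [copyCount_eq_cpairs _ hab]
    exact K_count a (n-a) b (by omega) (by omega) (by omega)
  set e : Fin n ≃ (Fin a ⊕ Fin (n - a)) :=
    (finCongr (by omega : n = a + (n - a))).trans finSumFinEquiv.symm with he
  set Gn : SimpleGraph (Fin n) := (Kbip a (n-a)).comap e with hGn
  have hKfree : ¬ ContainsCopy (Kbip (a+1) t) (Kbip a (n-a)) := by
    rw [not_contains_iff_free]
    exact K_free a (n-a) t (by omega)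
  have hGnfree : ¬ ContainsCopy (Kbip (a+1) t) Gn :=
    fun h => hKfree (containsCopy_comap _ _ e h)
  have hGncount : _root_.copyCount (Kbip a b) Gn = (n-a).choose b := by
    rw [copyCount_eq_cpairs _ hab, hGn, cpairs_comap_card]
    exact K_count a (n-a) b (by omega) (by omega) (by omega)
  rw [exGen]
  apply IsGreatest.csSup_eq
  constructor
  · exact ⟨Gn, hGnfree, by rw [hGncount, hRHS]⟩
  · rintro m ⟨G, hGfree, rfl⟩
    rw [hRHS, copyCount_eq_cpairs _ hab]
    have hfree' : ∀ T : Finset (Fin n), T.card = t → (cN G T).card ≤ a :=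
      (not_contains_iff_free G a t).mp hGfree
    have hcard : nstar a b + a + b ≤ Fintype.card (Fin n) := by
      rw [Fintype.card_fin]; omega
    have h := core_bound G a b t ha hat htb hcase hfree' hcard
    rwa [Fintype.card_fin] at h
end

section
/- Let a, b, t be integers with 1 ≤ a < b < t. Then for every positive integer n, (a+b)·ex(n, K_{a,b}, K_{1,t}) ≤ n·(C(t-1,a)·C(t-1,b-1) + C(t-1,b)·C(t-1,a-1)), where C(m,k) denotes the binomial coefficient. -/
open SimpleGraph

section Aux
open Finset
open scoped Classical

variable {n a b t : ℕ} {G : SimpleGraph (Fin n)}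

noncomputable instance : Fintype (SimpleGraph.Subgraph G) := by
  have : Finite (SimpleGraph.Subgraph G) := by
    apply Finite.of_injective (fun s => (s.verts, s.Adj))
    intro s₁ s₂ h
    exact SimpleGraph.Subgraph.ext (congrArg Prod.fst h) (congrArg Prod.snd h)
  exact Fintype.ofFinite _

/-- neighborhood as a Finset -/
noncomputable def nbr (G : SimpleGraph (Fin n)) (v : Fin n) : Finset (Fin n) :=
  Finset.univ.filter (G.Adj v)

/-- vertices of a subgraph whose subgraph-neighborhood has size `k` -/
noncomputable def part (k : ℕ) (s : G.Subgraph) : Finset (Fin n) :=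
  Finset.univ.filter (fun x => (s.neighborSet x).ncard = k)

lemma mem_nbr {v x : Fin n} : x ∈ nbr G v ↔ G.Adj v x := by
  simp [nbr]

lemma mem_part {k : ℕ} {s : G.Subgraph} {x : Fin n} :
    x ∈ part k s ↔ (s.neighborSet x).ncard = k := by
  simp [part]

lemma Kbip_ncard_left (i : Fin a) :
    Nat.card ((Kbip a b).neighborSet (Sum.inl i)) = b := by
  have h : (Kbip a b).neighborSet (Sum.inl i) = Set.range Sum.inr := by
    ext y; cases y <;> simp [SimpleGraph.neighborSet]
  rw [h, Nat.card_range_of_injective Sum.inr_injective, Nat.card_eq_fintype_card,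
    Fintype.card_fin]

lemma Kbip_ncard_right (j : Fin b) :
    Nat.card ((Kbip a b).neighborSet (Sum.inr j)) = a := by
  have h : (Kbip a b).neighborSet (Sum.inr j) = Set.range Sum.inl := by
    ext y; cases y <;> simp [SimpleGraph.neighborSet]
  rw [h, Nat.card_range_of_injective Sum.inl_injective, Nat.card_eq_fintype_card,
    Fintype.card_fin]

lemma ncard_nbhd (s : G.Subgraph) (e : Kbip a b ≃g s.coe) (u : Fin a ⊕ Fin b) :
    (s.neighborSet ((e u) : Fin n)).ncard = Nat.card ((Kbip a b).neighborSet u) := by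
  have h := Nat.card_congr ((e.mapNeighborSet u).trans
    (SimpleGraph.Subgraph.coeNeighborSetEquiv (e u)))
  rw [← Nat.card_coe_set_eq]
  exact h.symm

lemma ncard_nbhd_eq_zero (s : G.Subgraph) (x : Fin n) (hx : x ∉ s.verts) :
    (s.neighborSet x).ncard = 0 := by
  have h : s.neighborSet x = ∅ := by
    ext y; simp only [SimpleGraph.Subgraph.mem_neighborSet, Set.mem_empty_iff_false, iff_false]
    exact fun h => hx (s.edge_vert h)
  simp [h]

lemma part_b_eq (hab : a < b) (s : G.Subgraph) (e : Kbip a b ≃g s.coe) :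
    part b s = Finset.univ.image (fun i : Fin a => ((e (Sum.inl i)) : Fin n)) := by
  ext x
  simp only [mem_part, Finset.mem_image, Finset.mem_univ, true_and]
  constructor
  · intro hx
    have hb : 0 < b := lt_of_le_of_lt (Nat.zero_le a) hab
    have hne : (s.neighborSet x).Nonempty := by
      rw [← Set.ncard_pos (Set.toFinite _), hx]; exact hb
    obtain ⟨y, hy⟩ := hne
    have hx' : x ∈ s.verts := s.edge_vert hy
    cases hsy : e.symm ⟨x, hx'⟩ with
    | inl i =>
      refine ⟨i, ?_⟩
      have : e (Sum.inl i) = ⟨x, hx'⟩ := by rw [← hsy, RelIso.apply_symm_apply]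
      exact congrArg Subtype.val this
    | inr j =>
      exfalso
      have h2 : (s.neighborSet ((e (Sum.inr j)) : Fin n)).ncard = a := by
        rw [ncard_nbhd s e, Kbip_ncard_right]
      have : e (Sum.inr j) = ⟨x, hx'⟩ := by rw [← hsy, RelIso.apply_symm_apply]
      rw [this] at h2
      exact absurd (hx ▸ h2) (Nat.ne_of_lt hab).symm
  · rintro ⟨i, rfl⟩
    rw [ncard_nbhd s e (Sum.inl i), Kbip_ncard_left]

lemma part_a_eq (ha : 1 ≤ a) (hab : a < b) (s : G.Subgraph) (e : Kbip a b ≃g s.coe) :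
    part a s = Finset.univ.image (fun j : Fin b => ((e (Sum.inr j)) : Fin n)) := by
  ext x
  simp only [mem_part, Finset.mem_image, Finset.mem_univ, true_and]
  constructor
  · intro hx
    have hne : (s.neighborSet x).Nonempty := by
      rw [← Set.ncard_pos (Set.toFinite _), hx]; exact ha
    obtain ⟨y, hy⟩ := hne
    have hx' : x ∈ s.verts := s.edge_vert hy
    cases hsy : e.symm ⟨x, hx'⟩ with
    | inr j =>
      refine ⟨j, ?_⟩
      have : e (Sum.inr j) = ⟨x, hx'⟩ := by rw [← hsy, RelIso.apply_symm_apply]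
      exact congrArg Subtype.val this
    | inl i =>
      exfalso
      have h2 : (s.neighborSet ((e (Sum.inl i)) : Fin n)).ncard = b := by
        rw [ncard_nbhd s e, Kbip_ncard_left]
      have : e (Sum.inl i) = ⟨x, hx'⟩ := by rw [← hsy, RelIso.apply_symm_apply]
      rw [this] at h2
      exact absurd (hx ▸ h2) (Nat.ne_of_lt hab)
  · rintro ⟨j, rfl⟩
    rw [ncard_nbhd s e (Sum.inr j), Kbip_ncard_right]

lemma card_part_b (hab : a < b) (s : G.Subgraph) (e : Kbip a b ≃g s.coe) :
    (part b s).card = a := by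
  rw [part_b_eq hab s e, Finset.card_image_of_injective _
    (fun i₁ i₂ h => Sum.inl_injective (e.injective (Subtype.ext h))), Finset.card_univ,
    Fintype.card_fin]

lemma card_part_a (ha : 1 ≤ a) (hab : a < b) (s : G.Subgraph) (e : Kbip a b ≃g s.coe) :
    (part a s).card = b := by
  rw [part_a_eq ha hab s e, Finset.card_image_of_injective _
    (fun j₁ j₂ h => Sum.inr_injective (e.injective (Subtype.ext h))), Finset.card_univ,
    Fintype.card_fin]

lemma verts_eq (ha : 1 ≤ a) (hab : a < b) (s : G.Subgraph) (e : Kbip a b ≃g s.coe) :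
    s.verts = ↑(part b s ∪ part a s) := by
  ext x
  rw [Finset.coe_union, Set.mem_union, Finset.mem_coe, Finset.mem_coe,
    part_b_eq hab s e, part_a_eq ha hab s e]
  simp only [Finset.mem_image, Finset.mem_univ, true_and]
  constructor
  · intro hx
    cases hsy : e.symm ⟨x, hx⟩ with
    | inl i =>
      exact Or.inl ⟨i, congrArg Subtype.val (by rw [← hsy, RelIso.apply_symm_apply] : e (Sum.inl i) = ⟨x, hx⟩)⟩
    | inr j =>
      exact Or.inr ⟨j, congrArg Subtype.val (by rw [← hsy, RelIso.apply_symm_apply] : e (Sum.inr j) = ⟨x, hx⟩)⟩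
  · rintro (⟨i, rfl⟩ | ⟨j, rfl⟩)
    · exact (e (Sum.inl i)).2
    · exact (e (Sum.inr j)).2

lemma adj_iff (ha : 1 ≤ a) (hab : a < b) (s : G.Subgraph) (e : Kbip a b ≃g s.coe)
    (x y : Fin n) :
    s.Adj x y ↔ ((x ∈ part b s ∧ y ∈ part a s) ∨ (y ∈ part b s ∧ x ∈ part a s)) := by
  constructor
  · intro h
    have hx : x ∈ s.verts := s.edge_vert h
    have hy : y ∈ s.verts := s.edge_vert h.symm
    have hcoe : s.coe.Adj ⟨x, hx⟩ ⟨y, hy⟩ := by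
      rw [SimpleGraph.Subgraph.coe_adj]; exact h
    have hadj : (Kbip a b).Adj (e.symm ⟨x, hx⟩) (e.symm ⟨y, hy⟩) := by
      rw [← e.map_rel_iff, RelIso.apply_symm_apply, RelIso.apply_symm_apply]
      exact hcoe
    have hxv : ∀ i : Fin a, e.symm ⟨x, hx⟩ = Sum.inl i → x ∈ part b s := by
      intro i hi
      have hxe : ((e (Sum.inl i)) : Fin n) = x :=
        congrArg Subtype.val (by rw [← hi, RelIso.apply_symm_apply] : e (Sum.inl i) = ⟨x, hx⟩)
      rw [mem_part, ← hxe, ncard_nbhd s e, Kbip_ncard_left]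
    have hyv : ∀ i : Fin a, e.symm ⟨y, hy⟩ = Sum.inl i → y ∈ part b s := by
      intro i hi
      have hye : ((e (Sum.inl i)) : Fin n) = y :=
        congrArg Subtype.val (by rw [← hi, RelIso.apply_symm_apply] : e (Sum.inl i) = ⟨y, hy⟩)
      rw [mem_part, ← hye, ncard_nbhd s e, Kbip_ncard_left]
    have hxw : ∀ j : Fin b, e.symm ⟨x, hx⟩ = Sum.inr j → x ∈ part a s := by
      intro j hj
      have hxe : ((e (Sum.inr j)) : Fin n) = x :=
        congrArg Subtype.val (by rw [← hj, RelIso.apply_symm_apply] : e (Sum.inr j) = ⟨x, hx⟩)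
      rw [mem_part, ← hxe, ncard_nbhd s e, Kbip_ncard_right]
    have hyw : ∀ j : Fin b, e.symm ⟨y, hy⟩ = Sum.inr j → y ∈ part a s := by
      intro j hj
      have hye : ((e (Sum.inr j)) : Fin n) = y :=
        congrArg Subtype.val (by rw [← hj, RelIso.apply_symm_apply] : e (Sum.inr j) = ⟨y, hy⟩)
      rw [mem_part, ← hye, ncard_nbhd s e, Kbip_ncard_right]
    cases hu : e.symm ⟨x, hx⟩ with
    | inl i =>
      cases hw : e.symm ⟨y, hy⟩ with
      | inl i' => rw [hu, hw] at hadj; simp at hadj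
      | inr j => exact Or.inl ⟨hxv i hu, hyw j hw⟩
    | inr j =>
      cases hw : e.symm ⟨y, hy⟩ with
      | inl i => exact Or.inr ⟨hyv i hw, hxw j hu⟩
      | inr j' => rw [hu, hw] at hadj; simp at hadj
  · have key : ∀ x y : Fin n, x ∈ part b s → y ∈ part a s → s.Adj x y := by
      intro x y hxb hya
      rw [part_b_eq hab s e] at hxb
      rw [part_a_eq ha hab s e] at hya
      simp only [Finset.mem_image, Finset.mem_univ, true_and] at hxb hya
      obtain ⟨i, hi⟩ := hxb
      obtain ⟨j, hj⟩ := hya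
      have hadj : (Kbip a b).Adj (Sum.inl i) (Sum.inr j) := by simp
      have := e.map_rel_iff.mpr hadj
      rw [SimpleGraph.Subgraph.coe_adj] at this
      rw [← hi, ← hj]
      exact this
    rintro (⟨h1, h2⟩ | ⟨h1, h2⟩)
    · exact key x y h1 h2
    · exact (key y x h1 h2).symm

lemma parts_determine (ha : 1 ≤ a) (hab : a < b) (s₁ s₂ : G.Subgraph)
    (e₁ : Kbip a b ≃g s₁.coe) (e₂ : Kbip a b ≃g s₂.coe)
    (hB : part b s₁ = part b s₂) (hA : part a s₁ = part a s₂) : s₁ = s₂ := by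
  apply SimpleGraph.Subgraph.ext
  · rw [verts_eq ha hab s₁ e₁, verts_eq ha hab s₂ e₂, hB, hA]
  · funext x y
    apply propext
    rw [adj_iff ha hab s₁ e₁, adj_iff ha hab s₂ e₂, hB, hA]

/-- generic counting lemma -/
lemma key_count (v : Fin n) (p q : ℕ) (hp : 1 ≤ p) (hq : 1 ≤ q)
    (hdeg : ∀ u : Fin n, (nbr G u).card ≤ t - 1)
    (S : Finset G.Subgraph) (P Q : G.Subgraph → Finset (Fin n))
    (hinj : ∀ s₁ ∈ S, ∀ s₂ ∈ S, P s₁ = P s₂ → Q s₁ = Q s₂ → s₁ = s₂)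
    (hPcard : ∀ s ∈ S, (P s).card = p) (hQcard : ∀ s ∈ S, (Q s).card = q)
    (hPN : ∀ s ∈ S, ∀ x ∈ P s, G.Adj v x)
    (hvQ : ∀ s ∈ S, v ∈ Q s)
    (hPQ : ∀ s ∈ S, ∀ x ∈ P s, ∀ y ∈ Q s, y ≠ v → G.Adj x y) :
    S.card ≤ Nat.choose (t-1) p * Nat.choose (t-1) (q-1) := by
  classical
  set f : G.Subgraph → Finset (Fin n) × Finset (Fin n) := fun s => (P s, (Q s).erase v) with hf
  have hinj' : Set.InjOn f S := by
    intro s₁ h₁ s₂ h₂ h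
    have hP : P s₁ = P s₂ := congrArg Prod.fst h
    have hQ' : (Q s₁).erase v = (Q s₂).erase v := congrArg Prod.snd h
    have hQ : Q s₁ = Q s₂ := by
      rw [← Finset.insert_erase (hvQ s₁ h₁), ← Finset.insert_erase (hvQ s₂ h₂), hQ']
    exact hinj s₁ h₁ s₂ h₂ hP hQ
  rw [← Finset.card_image_of_injOn hinj']
  set uA : Finset (Fin n) → Fin n := fun A => if h : A.Nonempty then A.min' h else v with huA
  set Tgt : Finset (Finset (Fin n) × Finset (Fin n)) :=
    ((nbr G v).powersetCard p).biUnion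
      (fun A => (((nbr G (uA A)).erase v).powersetCard (q-1)).image (fun B => (A, B))) with hT
  have hsub : S.image f ⊆ Tgt := by
    intro pr hpr
    rw [Finset.mem_image] at hpr
    obtain ⟨s, hs, rfl⟩ := hpr
    rw [hT, Finset.mem_biUnion]
    have hPmem : P s ∈ (nbr G v).powersetCard p := by
      rw [Finset.mem_powersetCard]
      exact ⟨fun x hx => mem_nbr.mpr (hPN s hs x hx), hPcard s hs⟩
    refine ⟨P s, hPmem, ?_⟩
    rw [Finset.mem_image]
    refine ⟨(Q s).erase v, ?_, rfl⟩
    rw [Finset.mem_powersetCard]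
    constructor
    · intro y hy
      rw [Finset.mem_erase] at hy ⊢
      refine ⟨hy.1, mem_nbr.mpr ?_⟩
      have hPne : (P s).Nonempty := by
        rw [← Finset.card_pos, hPcard s hs]; exact hp
      have hmin : uA (P s) ∈ P s := by
        rw [huA]
        simp only [dif_pos hPne]
        exact (P s).min'_mem hPne
      exact hPQ s hs _ hmin y hy.2 hy.1
    · rw [Finset.card_erase_of_mem (hvQ s hs), hQcard s hs]
  calc (S.image f).card ≤ Tgt.card := Finset.card_le_card hsub
    _ ≤ ∑ A ∈ (nbr G v).powersetCard p,
        ((((nbr G (uA A)).erase v).powersetCard (q-1)).image (fun B => (A, B))).card :=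
          Finset.card_biUnion_le
    _ ≤ ∑ _A ∈ (nbr G v).powersetCard p, Nat.choose (t-1) (q-1) := by
        apply Finset.sum_le_sum
        intro A hA
        calc ((((nbr G (uA A)).erase v).powersetCard (q-1)).image (fun B => (A, B))).card
            ≤ (((nbr G (uA A)).erase v).powersetCard (q-1)).card := Finset.card_image_le
          _ = Nat.choose ((nbr G (uA A)).erase v).card (q-1) := by
              rw [Finset.card_powersetCard]
          _ ≤ Nat.choose (t-1) (q-1) :=
              Nat.choose_le_choose _ (le_trans (Finset.card_erase_le) (hdeg _))
    _ = ((nbr G v).powersetCard p).card * Nat.choose (t-1) (q-1) := by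
        rw [Finset.sum_const, smul_eq_mul]
    _ ≤ Nat.choose (t-1) p * Nat.choose (t-1) (q-1) := by
        apply Nat.mul_le_mul_right
        rw [Finset.card_powersetCard]
        exact Nat.choose_le_choose _ (hdeg v)

lemma per_vertex (ha : 1 ≤ a) (hab : a < b) (hbt : b < t)
    (hdeg : ∀ u : Fin n, (nbr G u).card ≤ t - 1)
    (T : Finset G.Subgraph) (hT : ∀ s ∈ T, Nonempty (Kbip a b ≃g s.coe)) (v : Fin n) :
    (T.filter (fun s => v ∈ part b s ∪ part a s)).card ≤
      Nat.choose (t - 1) a * Nat.choose (t - 1) (b - 1) +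
        Nat.choose (t - 1) b * Nat.choose (t - 1) (a - 1) := by
  classical
  have hb : 1 ≤ b := le_of_lt (lt_of_le_of_lt ha hab)
  have hsplit : T.filter (fun s => v ∈ part b s ∪ part a s) =
      T.filter (fun s => v ∈ part b s) ∪ T.filter (fun s => v ∈ part a s) := by
    rw [← Finset.filter_or]
    apply Finset.filter_congr
    intro s _
    simp [Finset.mem_union]
  rw [hsplit]
  refine le_trans (Finset.card_union_le _ _) ?_
  rw [Nat.add_comm (Nat.choose (t - 1) a * Nat.choose (t - 1) (b - 1))]
  apply Nat.add_le_add
  · -- v in the a-side (part b s): pairs (part a s, part b s), bound C(t-1,b)*C(t-1,a-1)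
    apply key_count (t := t) v b a hb ha hdeg _ (part a) (part b)
    · intro s₁ h₁ s₂ h₂ hP hQ
      obtain ⟨e₁⟩ := hT s₁ (Finset.mem_filter.mp h₁).1
      obtain ⟨e₂⟩ := hT s₂ (Finset.mem_filter.mp h₂).1
      exact parts_determine ha hab s₁ s₂ e₁ e₂ hQ hP
    · intro s hs
      obtain ⟨e⟩ := hT s (Finset.mem_filter.mp hs).1
      exact card_part_a ha hab s e
    · intro s hs
      obtain ⟨e⟩ := hT s (Finset.mem_filter.mp hs).1
      exact card_part_b hab s e
    · intro s hs x hx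
      obtain ⟨e⟩ := hT s (Finset.mem_filter.mp hs).1
      have hv : v ∈ part b s := (Finset.mem_filter.mp hs).2
      have : s.Adj v x := (adj_iff ha hab s e v x).mpr (Or.inl ⟨hv, hx⟩)
      exact s.adj_sub this
    · intro s hs
      exact (Finset.mem_filter.mp hs).2
    · intro s hs x hx y hy _
      obtain ⟨e⟩ := hT s (Finset.mem_filter.mp hs).1
      have : s.Adj y x := (adj_iff ha hab s e y x).mpr (Or.inl ⟨hy, hx⟩)
      exact s.adj_sub this.symm
  · -- v in the b-side (part a s): pairs (part b s, part a s), bound C(t-1,a)*C(t-1,b-1)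
    apply key_count (t := t) v a b ha hb hdeg _ (part b) (part a)
    · intro s₁ h₁ s₂ h₂ hP hQ
      obtain ⟨e₁⟩ := hT s₁ (Finset.mem_filter.mp h₁).1
      obtain ⟨e₂⟩ := hT s₂ (Finset.mem_filter.mp h₂).1
      exact parts_determine ha hab s₁ s₂ e₁ e₂ hP hQ
    · intro s hs
      obtain ⟨e⟩ := hT s (Finset.mem_filter.mp hs).1
      exact card_part_b hab s e
    · intro s hs
      obtain ⟨e⟩ := hT s (Finset.mem_filter.mp hs).1
      exact card_part_a ha hab s e
    · intro s hs x hx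
      obtain ⟨e⟩ := hT s (Finset.mem_filter.mp hs).1
      have hv : v ∈ part a s := (Finset.mem_filter.mp hs).2
      have : s.Adj x v := (adj_iff ha hab s e x v).mpr (Or.inl ⟨hx, hv⟩)
      exact (s.adj_sub this).symm
    · intro s hs
      exact (Finset.mem_filter.mp hs).2
    · intro s hs x hx y hy _
      obtain ⟨e⟩ := hT s (Finset.mem_filter.mp hs).1
      have : s.Adj x y := (adj_iff ha hab s e x y).mpr (Or.inl ⟨hx, hy⟩)
      exact s.adj_sub this

lemma per_graph (ha : 1 ≤ a) (hab : a < b) (hbt : b < t)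
    (hdeg : ∀ u : Fin n, (nbr G u).card ≤ t - 1) :
    (a + b) * _root_.copyCount (Kbip a b) G ≤
      n * (Nat.choose (t - 1) a * Nat.choose (t - 1) (b - 1) +
        Nat.choose (t - 1) b * Nat.choose (t - 1) (a - 1)) := by
  classical
  set M := Nat.choose (t - 1) a * Nat.choose (t - 1) (b - 1) +
    Nat.choose (t - 1) b * Nat.choose (t - 1) (a - 1) with hM
  set T : Finset G.Subgraph :=
    Finset.univ.filter (fun s => Nonempty (Kbip a b ≃g s.coe)) with hTdef
  have hT : ∀ s ∈ T, Nonempty (Kbip a b ≃g s.coe) := by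
    intro s hs; exact (Finset.mem_filter.mp hs).2
  have hcc : _root_.copyCount (Kbip a b) G = T.card := by
    rw [_root_.copyCount, Nat.card_eq_fintype_card, hTdef, ← Fintype.card_subtype]
  rw [hcc]
  have hcard : ∀ s ∈ T, (part b s ∪ part a s).card = a + b := by
    intro s hs
    obtain ⟨e⟩ := hT s hs
    have hdisj : Disjoint (part b s) (part a s) := by
      rw [Finset.disjoint_left]
      intro x hxb hxa
      rw [mem_part] at hxb hxa
      exact (Nat.ne_of_lt hab) (hxa.symm.trans hxb)
    rw [Finset.card_union_of_disjoint hdisj, card_part_b hab s e, card_part_a ha hab s e]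
  calc (a + b) * T.card = ∑ _s ∈ T, (a + b) := by
        rw [Finset.sum_const, smul_eq_mul, mul_comm]
    _ = ∑ s ∈ T, (part b s ∪ part a s).card :=
        Finset.sum_congr rfl (fun s hs => (hcard s hs).symm)
    _ = ∑ s ∈ T, ∑ v ∈ Finset.univ, ite (v ∈ part b s ∪ part a s) 1 0 := by
        refine Finset.sum_congr rfl fun s _ => ?_
        rw [← Finset.card_filter]
        congr 1
        ext x
        simp
    _ = ∑ v ∈ Finset.univ, ∑ s ∈ T, ite (v ∈ part b s ∪ part a s) 1 0 := Finset.sum_comm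
    _ = ∑ v ∈ Finset.univ, (T.filter (fun s => v ∈ part b s ∪ part a s)).card := by
        refine Finset.sum_congr rfl fun v _ => ?_
        rw [Finset.card_filter]
    _ ≤ ∑ _v ∈ (Finset.univ : Finset (Fin n)), M :=
        Finset.sum_le_sum (fun v _ => per_vertex ha hab hbt hdeg T hT v)
    _ = n * M := by
        rw [Finset.sum_const, Finset.card_univ, Fintype.card_fin, smul_eq_mul]

lemma degree_bound (ht : 1 ≤ t) (hfree : ¬ ContainsCopy (Kbip 1 t) G) :
    ∀ u : Fin n, (nbr G u).card ≤ t - 1 := by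
  intro u
  by_contra hlt
  push_neg at hlt
  have htle : t ≤ (nbr G u).card := by omega
  obtain ⟨s, hsub, hcard⟩ := Finset.exists_subset_card_eq htle
  have e : Fin t ≃ ↥s := (s.equivFinOfCardEq hcard).symm
  apply hfree
  refine ⟨⟨fun x => Sum.elim (fun _ => u) (fun i => ((e i : Fin n))) x, ?_⟩, ?_⟩
  · intro x y hxy
    rcases x with i | i <;> rcases y with j | j
    · simp at hxy
    · exact mem_nbr.mp (hsub (e j).2)
    · exact (mem_nbr.mp (hsub (e i).2)).symm
    · simp at hxy
  · intro x y hxy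
    rcases x with i | i <;> rcases y with j | j
    · exact congrArg Sum.inl (Subsingleton.elim i j)
    · exfalso
      have hadj : G.Adj u ((e j : Fin n)) := mem_nbr.mp (hsub (e j).2)
      exact (G.ne_of_adj hadj) hxy
    · exfalso
      have hadj : G.Adj u ((e i : Fin n)) := mem_nbr.mp (hsub (e i).2)
      exact (G.ne_of_adj hadj) hxy.symm
    · exact congrArg Sum.inr (e.injective (Subtype.ext hxy))

end Aux

/-- if `1 ≤ a < b < t`, then for every positive `n`,
`(a+b)·ex(n, K_{a,b}, K_{1,t}) ≤ n·(C(t-1,a)·C(t-1,b-1) + C(t-1,b)·C(t-1,a-1))`. -/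
theorem stmt10 (a b t : ℕ) (ha : 1 ≤ a) (hab : a < b) (hbt : b < t) (n : ℕ) (hn : 0 < n) :
    (a + b) * exGen n (Kbip a b) (Kbip 1 t) ≤
      n * (Nat.choose (t - 1) a * Nat.choose (t - 1) (b - 1) +
        Nat.choose (t - 1) b * Nat.choose (t - 1) (a - 1)) := by
  have ht : 1 ≤ t := le_trans ha (le_of_lt (lt_trans hab hbt))
  set M := Nat.choose (t - 1) a * Nat.choose (t - 1) (b - 1) +
    Nat.choose (t - 1) b * Nat.choose (t - 1) (a - 1) with hM
  have hfree_bot : ¬ ContainsCopy (Kbip 1 t) (⊥ : SimpleGraph (Fin n)) := by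
    rintro ⟨f, -⟩
    have hadj : (Kbip 1 t).Adj (Sum.inl 0) (Sum.inr ⟨0, ht⟩) := by simp
    exact f.map_rel hadj
  have hne : {m | ∃ G : SimpleGraph (Fin n),
      ¬ ContainsCopy (Kbip 1 t) G ∧ m = _root_.copyCount (Kbip a b) G}.Nonempty :=
    ⟨_root_.copyCount (Kbip a b) (⊥ : SimpleGraph (Fin n)), ⊥, hfree_bot, rfl⟩
  have hub : ∀ m ∈ {m | ∃ G : SimpleGraph (Fin n),
      ¬ ContainsCopy (Kbip 1 t) G ∧ m = _root_.copyCount (Kbip a b) G}, m ≤ (n * M) / (a + b) := by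
    rintro m ⟨G, hfree, rfl⟩
    have hdeg := degree_bound ht hfree
    have hpg := per_graph ha hab hbt hdeg
    rw [Nat.le_div_iff_mul_le (by omega : 0 < a + b), mul_comm]
    exact hpg
  have h1 : exGen n (Kbip a b) (Kbip 1 t) ≤ (n * M) / (a + b) := csSup_le hne hub
  calc (a + b) * exGen n (Kbip a b) (Kbip 1 t) ≤ (a + b) * ((n * M) / (a + b)) :=
        Nat.mul_le_mul_left _ h1
    _ ≤ n * M := by rw [mul_comm]; exact Nat.div_mul_le_self _ _
end
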